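/- arXiv:2509.25446 — 3 statements merged into one kernel-verified Lean document; each statement's English description precedes it below -/
import Mathlib

section
/- Let G be a finite group of order g, and for w ∈ G let f(w) be the number of pairs (u,v) ∈ G × G with w = uvu⁻¹v⁻¹. Then f is a class function on G, and for each irreducible character χ of G, the multiplicity ⟨f, χ⟩ equals g/χ(1). -/
open scoped BigOperators

/-- The commutator-counting function: `f w` is the number of pairs `(u,v)`
with `w = u v u⁻¹ v⁻¹`. -/
noncomputable def commCount (G : Type) [Group G] (w : G) : ℕ :=
  Nat.card {p : G × G // w = p.1 * p.2 * p.1⁻¹ * p.2⁻¹}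

open CategoryTheory LinearMap FDRep

lemma commCount_conj (G : Type) [Group G] (g w : G) :
    commCount G (g * w * g⁻¹) = commCount G w := by
  apply Nat.card_congr
  refine
    { toFun := fun p => ⟨(g⁻¹ * p.1.1 * g, g⁻¹ * p.1.2 * g), ?_⟩
      invFun := fun p => ⟨(g * p.1.1 * g⁻¹, g * p.1.2 * g⁻¹), ?_⟩
      left_inv := fun p => by ext <;> simp <;> group
      right_inv := fun p => by ext <;> simp <;> group }
  · obtain ⟨⟨a, b⟩, hp⟩ := p
    simp only at hp ⊢
    have h2 : w = g⁻¹ * (g * w * g⁻¹) * g := by group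
    rw [h2, hp]; group
  · obtain ⟨⟨a, b⟩, hp⟩ := p
    simp only at hp ⊢
    rw [hp]; group

lemma char_one_ne_zero {G : Type} [Group G] (V : FDRep ℂ G) [Simple V] :
    V.character 1 ≠ 0 := by
  rw [FDRep.char_one]
  have : Module.finrank ℂ V ≠ 0 := by
    intro h
    haveI : Subsingleton V := (Module.finrank_zero_iff (R := ℂ) (M := V)).mp h
    apply CategoryTheory.id_nonzero V
    have hh : (𝟙 V : V ⟶ V).hom = (0 : V ⟶ V).hom := by
      ext x
      exact @Subsingleton.elim V _ _ _
    exact Action.hom_ext _ _ hh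
  exact_mod_cast this

/-- The key Schur-lemma computation: `χ(1) * ∑_v χ(v u v⁻¹ u⁻¹) = |G| χ(u) χ(u⁻¹)`. -/
lemma key_sum (G : Type) [Group G] [Fintype G] (V : FDRep ℂ G) [Simple V] (u : G) :
    V.character 1 * ∑ v : G, V.character (v * u * v⁻¹ * u⁻¹) =
      (Fintype.card G : ℂ) * (V.character u * V.character u⁻¹) := by
  classical
  let T : V ⟶ V :=
    { hom := ConcreteCategory.ofHom (C := FGModuleCat ℂ) (∑ v : G, V.ρ (v * u * v⁻¹))
      comm := fun gm => by
        ext x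
        change (∑ v : G, (V.ρ (v * u * v⁻¹))) (V.ρ gm x)
            = V.ρ gm ((∑ v : G, (V.ρ (v * u * v⁻¹))) x)
        simp only [LinearMap.coe_comp, Function.comp_apply, LinearMap.sum_apply, map_sum]
        refine Fintype.sum_equiv (Equiv.mulLeft (show G from gm)⁻¹) _ _ (fun v => ?_)
        have h : v * u * v⁻¹ * (show G from gm)
            = (show G from gm) *
              (((show G from gm)⁻¹ * v) * u * ((show G from gm)⁻¹ * v)⁻¹) := by group
        simp only [Equiv.coe_mulLeft]
        rw [← Module.End.mul_apply, ← map_mul, h, map_mul, Module.End.mul_apply] }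
  obtain ⟨c, hc⟩ := CategoryTheory.endomorphism_simple_eq_smul_id ℂ T
  have hThom : (∑ v : G, V.ρ (v * u * v⁻¹)) = c • (LinearMap.id : V →ₗ[ℂ] V) := by
    have := congrArg (fun f => f.hom.hom.hom) hc
    exact this.symm
  have hx : ∀ v : G, LinearMap.trace ℂ V (V.ρ (v * u * v⁻¹)) = V.character u := fun v => by
    rw [show LinearMap.trace ℂ V (V.ρ (v * u * v⁻¹)) = V.character (v * u * v⁻¹) from rfl,
      FDRep.char_conj]
  have hcchi : c * V.character 1 = (Fintype.card G : ℂ) * V.character u := by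
    have h1 : LinearMap.trace ℂ V (∑ v : G, V.ρ (v * u * v⁻¹))
        = (Fintype.card G : ℂ) * V.character u := by
      rw [map_sum]
      simp only [hx]
      simp [Finset.sum_const, nsmul_eq_mul]
    rw [hThom, map_smul, trace_id] at h1
    rw [FDRep.char_one]
    rw [← h1]
    simp [mul_comm]
  have hsum : ∑ v : G, V.character (v * u * v⁻¹ * u⁻¹) = c * V.character u⁻¹ := by
    have : ∀ v : G, V.character (v * u * v⁻¹ * u⁻¹)
        = LinearMap.trace ℂ V (V.ρ (v * u * v⁻¹) * V.ρ u⁻¹) := fun v => by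
      rw [← map_mul]; rfl
    simp only [this]
    rw [← map_sum]
    have h2 : ∑ v : G, V.ρ (v * u * v⁻¹) * V.ρ u⁻¹
        = (∑ v : G, V.ρ (v * u * v⁻¹)) * V.ρ u⁻¹ := by
      rw [Finset.sum_mul]
    rw [h2, hThom]
    have : (c • (LinearMap.id : V →ₗ[ℂ] V)) * V.ρ u⁻¹ = c • V.ρ u⁻¹ := by
      ext x; simp
    rw [this, map_smul]
    rfl
  rw [hsum]
  calc V.character 1 * (c * V.character u⁻¹)
      = (c * V.character 1) * V.character u⁻¹ := by ring
    _ = (Fintype.card G : ℂ) * V.character u * V.character u⁻¹ := by rw [hcchi]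
    _ = _ := by ring

lemma char_self_sum (G : Type) [Group G] [Fintype G] (V : FDRep ℂ G) [Simple V] :
    ∑ g : G, V.character g * V.character g⁻¹ = (Fintype.card G : ℂ) := by
  have hne : (Fintype.card G : ℂ) ≠ 0 := by exact_mod_cast Fintype.card_ne_zero
  have h := FDRep.char_orthonormal (k := ℂ) (G := G) V V
  rw [if_pos ⟨Iso.refl V⟩, Nat.card_eq_fintype_card] at h
  have h2 := congrArg (fun x => (Fintype.card G : ℂ) * x) h
  simp only [smul_eq_mul, ← mul_assoc, mul_inv_cancel₀ hne, one_mul, mul_one] at h2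
  exact h2

/-- `f(w) = #{(u,v) : w = uvu⁻¹v⁻¹}` is a class function, and its multiplicity
`⟨f, χ⟩` in each irreducible character `χ` equals `|G| / χ(1)`. -/
theorem commCount_classFunction_and_multiplicity (G : Type) [Group G] [Fintype G] :
    (∀ g w : G, commCount G (g * w * g⁻¹) = commCount G w) ∧
    (∀ V : FDRep ℂ G, CategoryTheory.Simple V →
      (1 / (Fintype.card G : ℂ)) *
          ∑ w : G, (commCount G w : ℂ) * V.character w⁻¹ =
        (Fintype.card G : ℂ) / V.character 1) := by
  classical
  refine ⟨commCount_conj G, fun V hV => ?_⟩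
  haveI := hV
  have hcard : (Fintype.card G : ℂ) ≠ 0 := by exact_mod_cast Fintype.card_ne_zero
  have hchi1 : V.character 1 ≠ 0 := char_one_ne_zero V
  -- rewrite the sum over w as a sum over pairs
  have hcc : ∀ w : G, commCount G w
      = (Finset.univ.filter (fun p : G × G => p.1 * p.2 * p.1⁻¹ * p.2⁻¹ = w)).card := by
    intro w
    rw [commCount, Nat.card_eq_fintype_card, Fintype.card_subtype]
    congr 1
    ext p
    simp [eq_comm]
  have hfiber : ∑ w : G, (commCount G w : ℂ) * V.character w⁻¹
      = ∑ p : G × G, V.character ((p.1 * p.2 * p.1⁻¹ * p.2⁻¹)⁻¹) := by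
    rw [← Finset.sum_fiberwise Finset.univ (fun p : G × G => p.1 * p.2 * p.1⁻¹ * p.2⁻¹)
      (fun p => V.character ((p.1 * p.2 * p.1⁻¹ * p.2⁻¹)⁻¹))]
    refine Finset.sum_congr rfl (fun w _ => ?_)
    rw [hcc w]
    rw [Finset.sum_congr rfl (fun p hp => by
      rw [show p.1 * p.2 * p.1⁻¹ * p.2⁻¹ = w from (Finset.mem_filter.mp hp).2])]
    simp [Finset.sum_const, nsmul_eq_mul]
  have hpair : ∑ p : G × G, V.character ((p.1 * p.2 * p.1⁻¹ * p.2⁻¹)⁻¹)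
      = ∑ u : G, ∑ v : G, V.character (v * u * v⁻¹ * u⁻¹) := by
    rw [Fintype.sum_prod_type]
    refine Finset.sum_congr rfl (fun u _ => Finset.sum_congr rfl (fun v _ => ?_))
    congr 1
    group
  have hkey : V.character 1 * ∑ u : G, ∑ v : G, V.character (v * u * v⁻¹ * u⁻¹)
      = (Fintype.card G : ℂ) * (Fintype.card G : ℂ) := by
    rw [Finset.mul_sum]
    rw [Finset.sum_congr rfl (fun u _ => key_sum G V u)]
    rw [← Finset.mul_sum, char_self_sum G V]
  have hS : ∑ w : G, (commCount G w : ℂ) * V.character w⁻¹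
      = (Fintype.card G : ℂ) * (Fintype.card G : ℂ) / V.character 1 := by
    rw [hfiber, hpair, eq_div_iff hchi1, mul_comm, ← hkey]
  rw [hS]
  field_simp
end

section
/- The lattice of Young diagrams (partitions ordered by containment) is a 1-differential poset: every partition λ is covered by exactly one more partition than it covers, and two distinct partitions have a common upper cover if and only if they have a common lower cover (and then exactly one of each). -/
namespace YoungAux
open Finset

lemma rowLen_pos_iff (lam : YoungDiagram) (i : ℕ) :
    0 < lam.rowLen i ↔ i < lam.colLen 0 := by
  rw [← YoungDiagram.mem_iff_lt_rowLen, YoungDiagram.mem_iff_lt_colLen]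

lemma exists_erase {lam mu : YoungDiagram} (h : lam < mu) :
    ∃ (nu : YoungDiagram) (c : ℕ × ℕ), lam ≤ nu ∧ c ∉ nu.cells ∧
      mu.cells = insert c nu.cells := by
  have hsub : lam.cells ⊂ mu.cells := YoungDiagram.cells_ssubset_iff.mpr h
  have hne : (mu.cells \ lam.cells).Nonempty := by
    rw [Finset.sdiff_nonempty]
    exact fun hc => hsub.2 hc
  obtain ⟨c, hc, hmax⟩ := Finset.exists_max_image _ (fun c => c.1 + c.2) hne
  obtain ⟨hcmu, hclam⟩ := Finset.mem_sdiff.mp hc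
  obtain ⟨i, j⟩ := c
  simp only [YoungDiagram.mem_cells] at hcmu hclam
  have hr : (i + 1, j) ∉ mu := by
    intro hmem
    have hl : (i + 1, j) ∉ lam := fun hl => hclam (lam.up_left_mem (Nat.le_succ i) le_rfl hl)
    have := hmax (i + 1, j) (Finset.mem_sdiff.mpr ⟨hmem, hl⟩)
    simp at this
  have hd : (i, j + 1) ∉ mu := by
    intro hmem
    have hl : (i, j + 1) ∉ lam := fun hl => hclam (lam.up_left_mem le_rfl (Nat.le_succ j) hl)
    have := hmax (i, j + 1) (Finset.mem_sdiff.mpr ⟨hmem, hl⟩)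
    simp at this
  refine ⟨⟨mu.cells.erase (i, j), ?_⟩, (i, j), ?_, ?_, ?_⟩
  · intro ⟨x, y⟩ ⟨a, b⟩ hle hmem
    simp only [Finset.coe_erase, Set.mem_diff, Finset.mem_coe, YoungDiagram.mem_cells,
      Set.mem_singleton_iff, Prod.mk.injEq] at hmem ⊢
    obtain ⟨hxy, hne'⟩ := hmem
    obtain ⟨h1, h2⟩ := Prod.mk_le_mk.mp hle
    refine ⟨mu.up_left_mem h1 h2 hxy, ?_⟩
    rintro ⟨rfl, rfl⟩
    rcases Nat.lt_or_ge a x with hx | hx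
    · exact hr (mu.up_left_mem (by omega) h2 hxy)
    · have : x = a := le_antisymm hx h1
      subst this
      rcases Nat.lt_or_ge b y with hy | hy
      · exact hd (mu.up_left_mem le_rfl (by omega) hxy)
      · exact hne' ⟨rfl, by omega⟩
  · intro x hx
    change x ∈ mu.cells.erase (i, j)
    simp only [Finset.mem_erase, YoungDiagram.mem_cells]
    exact ⟨fun he => hclam (he ▸ hx), hsub.1 hx⟩
  · simp
  · rw [Finset.insert_erase hcmu]

lemma covby_iff {lam mu : YoungDiagram} :
    lam ⋖ mu ↔ lam ≤ mu ∧ mu.cells.card = lam.cells.card + 1 := by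
  constructor
  · intro h
    obtain ⟨nu, c, hlenu, hcnu, hins⟩ := exists_erase h.lt
    have hnultmu : nu < mu := by
      rw [← YoungDiagram.cells_ssubset_iff, hins]
      exact Finset.ssubset_insert hcnu
    have : nu = lam := by
      rcases h.eq_or_eq hlenu hnultmu.le with h' | h'
      · exact h'
      · exact absurd h' hnultmu.ne
    subst this
    exact ⟨h.le, by rw [hins, Finset.card_insert_of_notMem hcnu]⟩
  · rintro ⟨hle, hcard⟩
    have hlt : lam < mu := by
      rw [← YoungDiagram.cells_ssubset_iff]
      exact Finset.ssubset_iff_subset_ne.mpr ⟨hle, fun he => by simp [he] at hcard⟩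
    refine ⟨hlt, fun nu h1 h2 => ?_⟩
    have c1 : lam.cells.card < nu.cells.card :=
      Finset.card_lt_card (YoungDiagram.cells_ssubset_iff.mpr h1)
    have c2 : nu.cells.card < mu.cells.card :=
      Finset.card_lt_card (YoungDiagram.cells_ssubset_iff.mpr h2)
    omega

/-- rows where a cell can be added -/
def addR (lam : YoungDiagram) : Finset ℕ :=
  (Finset.range (lam.colLen 0 + 1)).filter
    (fun i => i = 0 ∨ lam.rowLen i < lam.rowLen (i - 1))

/-- rows where a cell can be removed -/
def remR (lam : YoungDiagram) : Finset ℕ :=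
  (Finset.range (lam.colLen 0)).filter (fun i => lam.rowLen (i + 1) < lam.rowLen i)

lemma mem_addR {lam : YoungDiagram} {i : ℕ} :
    i ∈ addR lam ↔ i = 0 ∨ lam.rowLen i < lam.rowLen (i - 1) := by
  rw [addR, Finset.mem_filter, Finset.mem_range, and_iff_right_iff_imp]
  rintro (rfl | hlt)
  · omega
  · have : 0 < lam.rowLen (i - 1) := by omega
    rw [rowLen_pos_iff] at this
    omega

lemma mem_remR {lam : YoungDiagram} {i : ℕ} :
    i ∈ remR lam ↔ lam.rowLen (i + 1) < lam.rowLen i := by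
  rw [remR, Finset.mem_filter, Finset.mem_range, and_iff_right_iff_imp]
  intro hlt
  have : 0 < lam.rowLen i := by omega
  rwa [rowLen_pos_iff] at this

lemma card_addR (lam : YoungDiagram) : (addR lam).card = (remR lam).card + 1 := by
  have : addR lam = insert 0 ((remR lam).image (· + 1)) := by
    ext j
    simp only [mem_addR, Finset.mem_insert, Finset.mem_image, mem_remR]
    constructor
    · rintro (rfl | hlt)
      · exact Or.inl rfl
      · rcases j with _ | i
        · exact Or.inl rfl
        · exact Or.inr ⟨i, by simpa using hlt, rfl⟩
    · rintro (rfl | ⟨i, hi, rfl⟩)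
      · exact Or.inl rfl
      · exact Or.inr (by simpa using hi)
  rw [this, Finset.card_insert_of_notMem (by simp),
    Finset.card_image_of_injective _ (add_left_injective 1)]

/-- add a cell at the end of row `i` -/
def addCell (lam : YoungDiagram) (i : ℕ)
    (h : i = 0 ∨ lam.rowLen i < lam.rowLen (i - 1)) : YoungDiagram where
  cells := insert (i, lam.rowLen i) lam.cells
  isLowerSet := by
    intro ⟨x, y⟩ ⟨a, b⟩ hle hmem
    obtain ⟨h1, h2⟩ := Prod.mk_le_mk.mp hle
    simp only [Finset.coe_insert, Set.mem_insert_iff, Finset.mem_coe,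
      YoungDiagram.mem_cells, Prod.mk.injEq] at hmem ⊢
    rcases hmem with ⟨hx, hy⟩ | hmem
    · rw [hx] at h1
      rw [hy] at h2
      rcases Nat.lt_or_ge b (lam.rowLen i) with hb | hb
      · exact Or.inr (YoungDiagram.mem_iff_lt_rowLen.mpr
          (lt_of_lt_of_le hb (lam.rowLen_anti _ _ h1)))
      · have hbeq : b = lam.rowLen i := le_antisymm h2 hb
        rcases Nat.lt_or_ge a i with ha | ha
        · refine Or.inr (YoungDiagram.mem_iff_lt_rowLen.mpr ?_)
          have hi0 : i ≠ 0 := by omega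
          have hlt : lam.rowLen i < lam.rowLen (i - 1) := h.resolve_left hi0
          calc b < lam.rowLen (i - 1) := by omega
          _ ≤ lam.rowLen a := lam.rowLen_anti _ _ (by omega)
        · exact Or.inl ⟨le_antisymm h1 ha, hbeq⟩
    · exact Or.inr (lam.up_left_mem h1 h2 hmem)

lemma addCell_cells (lam : YoungDiagram) (i : ℕ)
    (h : i = 0 ∨ lam.rowLen i < lam.rowLen (i - 1)) :
    (addCell lam i h).cells = insert (i, lam.rowLen i) lam.cells := rfl

/-- remove the last cell of row `i` -/
def removeCell (lam : YoungDiagram) (i : ℕ)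
    (h : lam.rowLen (i + 1) < lam.rowLen i) : YoungDiagram where
  cells := lam.cells.erase (i, lam.rowLen i - 1)
  isLowerSet := by
    intro ⟨x, y⟩ ⟨a, b⟩ hle hmem
    obtain ⟨h1, h2⟩ := Prod.mk_le_mk.mp hle
    simp only [Finset.coe_erase, Set.mem_diff, Finset.mem_coe, YoungDiagram.mem_cells,
      Set.mem_singleton_iff, Prod.mk.injEq] at hmem ⊢
    obtain ⟨hxy, hne⟩ := hmem
    refine ⟨lam.up_left_mem h1 h2 hxy, ?_⟩
    rintro ⟨ha, hb⟩
    rw [ha] at h1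
    rw [hb] at h2
    have hy : y < lam.rowLen x := YoungDiagram.mem_iff_lt_rowLen.mp hxy
    rcases Nat.lt_or_ge i x with hx | hx
    · have : lam.rowLen x ≤ lam.rowLen (i + 1) := lam.rowLen_anti _ _ (by omega)
      omega
    · have hxi : x = i := le_antisymm hx h1
      refine hne ⟨hxi, ?_⟩
      rw [hxi] at hy
      omega

lemma removeCell_cells (lam : YoungDiagram) (i : ℕ)
    (h : lam.rowLen (i + 1) < lam.rowLen i) :
    (removeCell lam i h).cells = lam.cells.erase (i, lam.rowLen i - 1) := rfl

lemma lam_covby_addCell (lam : YoungDiagram) (i : ℕ)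
    (h : i = 0 ∨ lam.rowLen i < lam.rowLen (i - 1)) :
    lam ≤ addCell lam i h ∧ (addCell lam i h).cells.card = lam.cells.card + 1 := by
  have hnot : (i, lam.rowLen i) ∉ lam.cells := by
    simp [YoungDiagram.mem_iff_lt_rowLen]
  exact ⟨fun c hc => Finset.mem_insert_of_mem hc, Finset.card_insert_of_notMem hnot⟩

lemma removeCell_covby (lam : YoungDiagram) (i : ℕ)
    (h : lam.rowLen (i + 1) < lam.rowLen i) :
    removeCell lam i h ≤ lam ∧ lam.cells.card = (removeCell lam i h).cells.card + 1 := by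
  have hmem : (i, lam.rowLen i - 1) ∈ lam.cells := by
    simp only [YoungDiagram.mem_cells, YoungDiagram.mem_iff_lt_rowLen]
    omega
  constructor
  · exact fun c hc => Finset.mem_of_mem_erase hc
  · rw [show (removeCell lam i h).cells = lam.cells.erase (i, lam.rowLen i - 1) from rfl,
      Finset.card_erase_of_mem hmem]
    have := Finset.card_pos.mpr ⟨_, hmem⟩
    omega

lemma covby_above_spec {lam mu : YoungDiagram} (h : lam ⋖ mu) :
    ∃ (i : ℕ) (hi : i = 0 ∨ lam.rowLen i < lam.rowLen (i - 1)), mu = addCell lam i hi := by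
  obtain ⟨hle, hcard⟩ := covby_iff.mp h
  have hsub : lam.cells ⊆ mu.cells := hle
  have hd : (mu.cells \ lam.cells).card = 1 := by
    rw [Finset.card_sdiff_of_subset hsub]; omega
  obtain ⟨c, hc⟩ := Finset.card_eq_one.mp hd
  obtain ⟨i, j⟩ := c
  have hcmem : (i, j) ∈ mu ∧ (i, j) ∉ lam := by
    have : (i, j) ∈ mu.cells \ lam.cells := hc ▸ Finset.mem_singleton_self _
    simpa using Finset.mem_sdiff.mp this
  have hother : ∀ x : ℕ × ℕ, x ∈ mu → x ≠ (i, j) → x ∈ lam := by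
    intro x hx hne
    by_contra hxl
    have : x ∈ mu.cells \ lam.cells := Finset.mem_sdiff.mpr ⟨hx, hxl⟩
    rw [hc, Finset.mem_singleton] at this
    exact hne this
  have hj : j = lam.rowLen i := by
    have h1 : lam.rowLen i ≤ j := by
      by_contra hlt
      exact hcmem.2 (YoungDiagram.mem_iff_lt_rowLen.mpr (by omega))
    rcases Nat.eq_or_lt_of_le h1 with heq | hlt
    · omega
    · have : (i, lam.rowLen i) ∈ lam :=
        hother _ (mu.up_left_mem le_rfl (by omega) hcmem.1) (by simp; omega)
      rw [YoungDiagram.mem_iff_lt_rowLen] at this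
      omega
  have hi : i = 0 ∨ lam.rowLen i < lam.rowLen (i - 1) := by
    rcases Nat.eq_zero_or_pos i with h0 | h0
    · exact Or.inl h0
    · right
      have : (i - 1, j) ∈ lam :=
        hother _ (mu.up_left_mem (by omega) le_rfl hcmem.1) (by simp; omega)
      rw [YoungDiagram.mem_iff_lt_rowLen] at this
      omega
  refine ⟨i, hi, ?_⟩
  ext ⟨x, y⟩
  rw [addCell_cells, Finset.mem_insert, YoungDiagram.mem_cells]
  constructor
  · intro hx
    by_cases hxe : (x, y) = (i, j)
    · left; rw [hxe, hj]
    · right; exact hother _ hx hxe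
  · rintro (heq | hx)
    · rw [heq, ← hj]; exact hcmem.1
    · exact hsub hx

lemma covby_below_spec {nu lam : YoungDiagram} (h : nu ⋖ lam) :
    ∃ (i : ℕ) (hi : lam.rowLen (i + 1) < lam.rowLen i), nu = removeCell lam i hi := by
  obtain ⟨hle, hcard⟩ := covby_iff.mp h
  have hsub : nu.cells ⊆ lam.cells := hle
  have hd : (lam.cells \ nu.cells).card = 1 := by
    rw [Finset.card_sdiff_of_subset hsub]; omega
  obtain ⟨c, hc⟩ := Finset.card_eq_one.mp hd
  obtain ⟨i, j⟩ := c
  have hcmem : (i, j) ∈ lam ∧ (i, j) ∉ nu := by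
    have : (i, j) ∈ lam.cells \ nu.cells := hc ▸ Finset.mem_singleton_self _
    simpa using Finset.mem_sdiff.mp this
  have hother : ∀ x : ℕ × ℕ, x ∈ lam → x ≠ (i, j) → x ∈ nu := by
    intro x hx hne
    by_contra hxl
    have : x ∈ lam.cells \ nu.cells := Finset.mem_sdiff.mpr ⟨hx, hxl⟩
    rw [hc, Finset.mem_singleton] at this
    exact hne this
  have hjlt : j < lam.rowLen i := YoungDiagram.mem_iff_lt_rowLen.mp hcmem.1
  have hj : lam.rowLen i = j + 1 := by
    rcases Nat.lt_or_ge (j + 1) (lam.rowLen i) with hlt | hge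
    · exfalso
      have h1 : (i, j + 1) ∈ lam := YoungDiagram.mem_iff_lt_rowLen.mpr hlt
      have h2 : (i, j + 1) ∈ nu := hother _ h1 (by simp)
      exact hcmem.2 (nu.up_left_mem le_rfl (Nat.le_succ j) h2)
    · omega
  have hi : lam.rowLen (i + 1) < lam.rowLen i := by
    have h1 : (i + 1, j) ∉ lam := by
      intro h1
      have h2 : (i + 1, j) ∈ nu := hother _ h1 (by simp)
      exact hcmem.2 (nu.up_left_mem (Nat.le_succ i) le_rfl h2)
    rw [YoungDiagram.mem_iff_lt_rowLen] at h1
    omega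
  refine ⟨i, hi, ?_⟩
  ext ⟨x, y⟩
  rw [removeCell_cells, Finset.mem_erase, YoungDiagram.mem_cells]
  constructor
  · intro hx
    refine ⟨?_, hsub hx⟩
    intro he
    rw [show lam.rowLen i - 1 = j by omega] at he
    rw [he] at hx
    exact hcmem.2 hx
  · rintro ⟨hne, hx⟩
    refine hother _ hx ?_
    have : (i, lam.rowLen i - 1) = (i, j) := by rw [hj]; simp
    rw [← this]
    exact hne

lemma addCell_not_mem (lam : YoungDiagram) (i : ℕ) :
    (i, lam.rowLen i) ∉ lam.cells := by
  simp [YoungDiagram.mem_iff_lt_rowLen]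

lemma addCell_sdiff (lam : YoungDiagram) (i : ℕ)
    (h : i = 0 ∨ lam.rowLen i < lam.rowLen (i - 1)) :
    (addCell lam i h).cells \ lam.cells = {(i, lam.rowLen i)} := by
  rw [addCell_cells, Finset.insert_sdiff_of_notMem _ (addCell_not_mem lam i),
    Finset.sdiff_self]
  rfl

lemma removeCell_sdiff (lam : YoungDiagram) (i : ℕ)
    (h : lam.rowLen (i + 1) < lam.rowLen i) :
    lam.cells \ (removeCell lam i h).cells = {(i, lam.rowLen i - 1)} := by
  rw [removeCell_cells]
  have hmem : (i, lam.rowLen i - 1) ∈ lam.cells := by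
    simp only [YoungDiagram.mem_cells, YoungDiagram.mem_iff_lt_rowLen]
    omega
  rw [Finset.sdiff_erase hmem, Finset.sdiff_self]
  rfl

lemma card_above (lam : YoungDiagram) :
    Nat.card {mu : YoungDiagram | lam ⋖ mu} = (addR lam).card := by
  set f : YoungDiagram → ℕ := fun mu => ((mu.cells \ lam.cells).sum Prod.fst) with hf
  have hfa : ∀ (i : ℕ) (hi : i = 0 ∨ lam.rowLen i < lam.rowLen (i - 1)),
      f (addCell lam i hi) = i := by
    intro i hi
    rw [hf]
    simp [addCell_sdiff lam i hi]
  have hbij : Set.BijOn f {mu : YoungDiagram | lam ⋖ mu} ↑(addR lam) := by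
    refine ⟨?_, ?_, ?_⟩
    · intro mu hmu
      obtain ⟨i, hi, rfl⟩ := covby_above_spec hmu
      simp only [Finset.coe_insert, Set.mem_insert_iff, Finset.mem_coe]
      rw [hfa i hi]
      exact mem_addR.mpr hi
    · intro mu1 h1 mu2 h2 heq
      obtain ⟨i1, hi1, rfl⟩ := covby_above_spec h1
      obtain ⟨i2, hi2, rfl⟩ := covby_above_spec h2
      rw [hfa i1 hi1, hfa i2 hi2] at heq
      subst heq
      exact YoungDiagram.ext (by rw [addCell_cells])
    · intro i hi
      rw [Finset.mem_coe, mem_addR] at hi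
      refine ⟨addCell lam i hi, ?_, hfa i hi⟩
      obtain ⟨hle, hcard⟩ := lam_covby_addCell lam i hi
      exact covby_iff.mpr ⟨hle, hcard⟩
  calc Nat.card {mu : YoungDiagram | lam ⋖ mu}
      = ({mu : YoungDiagram | lam ⋖ mu}).ncard := Nat.card_coe_set_eq _
    _ = (f '' {mu : YoungDiagram | lam ⋖ mu}).ncard :=
        (Set.ncard_image_of_injOn hbij.injOn).symm
    _ = (↑(addR lam) : Set ℕ).ncard := by rw [hbij.image_eq]
    _ = (addR lam).card := Set.ncard_coe_finset _

lemma card_below (lam : YoungDiagram) :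
    Nat.card {mu : YoungDiagram | mu ⋖ lam} = (remR lam).card := by
  set f : YoungDiagram → ℕ := fun mu => ((lam.cells \ mu.cells).sum Prod.fst) with hf
  have hfa : ∀ (i : ℕ) (hi : lam.rowLen (i + 1) < lam.rowLen i),
      f (removeCell lam i hi) = i := by
    intro i hi
    rw [hf]
    simp [removeCell_sdiff lam i hi]
  have hbij : Set.BijOn f {mu : YoungDiagram | mu ⋖ lam} ↑(remR lam) := by
    refine ⟨?_, ?_, ?_⟩
    · intro mu hmu
      obtain ⟨i, hi, rfl⟩ := covby_below_spec hmu
      rw [Finset.mem_coe, mem_remR, hfa i hi]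
      exact hi
    · intro mu1 h1 mu2 h2 heq
      obtain ⟨i1, hi1, rfl⟩ := covby_below_spec h1
      obtain ⟨i2, hi2, rfl⟩ := covby_below_spec h2
      rw [hfa i1 hi1, hfa i2 hi2] at heq
      subst heq
      exact YoungDiagram.ext (by rw [removeCell_cells])
    · intro i hi
      rw [Finset.mem_coe, mem_remR] at hi
      refine ⟨removeCell lam i hi, ?_, hfa i hi⟩
      obtain ⟨hle, hcard⟩ := removeCell_covby lam i hi
      exact covby_iff.mpr ⟨hle, hcard⟩
  calc Nat.card {mu : YoungDiagram | mu ⋖ lam}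
      = ({mu : YoungDiagram | mu ⋖ lam}).ncard := Nat.card_coe_set_eq _
    _ = (f '' {mu : YoungDiagram | mu ⋖ lam}).ncard :=
        (Set.ncard_image_of_injOn hbij.injOn).symm
    _ = (↑(remR lam) : Set ℕ).ncard := by rw [hbij.image_eq]
    _ = (remR lam).card := Set.ncard_coe_finset _

lemma D2 (lam : YoungDiagram) :
    Nat.card {mu : YoungDiagram | lam ⋖ mu} =
      Nat.card {mu : YoungDiagram | mu ⋖ lam} + 1 := by
  rw [card_above, card_below, card_addR]

lemma eq_sup_of_common_upper {lam mu nu : YoungDiagram} (hne : lam ≠ mu)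
    (h1 : lam ⋖ nu) (h2 : mu ⋖ nu) : nu = lam ⊔ mu := by
  have hle : lam ⊔ mu ≤ nu := sup_le h1.le h2.le
  rcases h1.eq_or_eq le_sup_left hle with h | h
  · exfalso
    have hmule : mu ≤ lam := le_sup_right.trans h.le
    rcases h2.eq_or_eq hmule h1.le with h' | h'
    · exact hne h'
    · exact h1.lt.ne h'
  · exact h.symm

lemma eq_inf_of_common_lower {lam mu nu : YoungDiagram} (hne : lam ≠ mu)
    (h1 : nu ⋖ lam) (h2 : nu ⋖ mu) : nu = lam ⊓ mu := by
  have hle : nu ≤ lam ⊓ mu := le_inf h1.le h2.le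
  rcases h1.eq_or_eq hle inf_le_left with h | h
  · exact h.symm
  · exfalso
    have hlemu : lam ≤ mu := h.ge.trans inf_le_right
    rcases h2.eq_or_eq h1.le hlemu with h' | h'
    · exact h1.lt.ne' h'
    · exact hne h'

lemma card_union_inter (lam mu : YoungDiagram) :
    (lam ⊔ mu).cells.card + (lam ⊓ mu).cells.card = lam.cells.card + mu.cells.card := by
  rw [YoungDiagram.cells_sup, YoungDiagram.cells_inf]
  exact Finset.card_union_add_card_inter _ _

lemma inf_covby_of_common_upper {lam mu nu : YoungDiagram} (hne : lam ≠ mu)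
    (h1 : lam ⋖ nu) (h2 : mu ⋖ nu) : lam ⊓ mu ⋖ lam ∧ lam ⊓ mu ⋖ mu := by
  have hsup := eq_sup_of_common_upper hne h1 h2
  have e1 := (covby_iff.mp h1).2
  have e2 := (covby_iff.mp h2).2
  have e3 := card_union_inter lam mu
  rw [← hsup] at e3
  constructor
  · exact covby_iff.mpr ⟨inf_le_left, by omega⟩
  · exact covby_iff.mpr ⟨inf_le_right, by omega⟩

lemma sup_covby_of_common_lower {lam mu nu : YoungDiagram} (hne : lam ≠ mu)
    (h1 : nu ⋖ lam) (h2 : nu ⋖ mu) : lam ⋖ lam ⊔ mu ∧ mu ⋖ lam ⊔ mu := by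
  have hinf := eq_inf_of_common_lower hne h1 h2
  have e1 := (covby_iff.mp h1).2
  have e2 := (covby_iff.mp h2).2
  have e3 := card_union_inter lam mu
  rw [← hinf] at e3
  constructor
  · exact covby_iff.mpr ⟨le_sup_left, by omega⟩
  · exact covby_iff.mpr ⟨le_sup_right, by omega⟩

lemma D1 (lam mu : YoungDiagram) (hne : lam ≠ mu) :
    ((∃ nu : YoungDiagram, lam ⋖ nu ∧ mu ⋖ nu) ↔
      (∃ nu : YoungDiagram, nu ⋖ lam ∧ nu ⋖ mu)) ∧
    ((∃ nu : YoungDiagram, lam ⋖ nu ∧ mu ⋖ nu) →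
      Nat.card {nu : YoungDiagram | lam ⋖ nu ∧ mu ⋖ nu} = 1 ∧
      Nat.card {nu : YoungDiagram | nu ⋖ lam ∧ nu ⋖ mu} = 1) := by
  constructor
  · constructor
    · rintro ⟨nu, h1, h2⟩
      obtain ⟨c1, c2⟩ := inf_covby_of_common_upper hne h1 h2
      exact ⟨lam ⊓ mu, c1, c2⟩
    · rintro ⟨nu, h1, h2⟩
      obtain ⟨c1, c2⟩ := sup_covby_of_common_lower hne h1 h2
      exact ⟨lam ⊔ mu, c1, c2⟩
  · rintro ⟨nu, h1, h2⟩
    obtain ⟨c1, c2⟩ := inf_covby_of_common_upper hne h1 h2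
    obtain ⟨d1, d2⟩ := sup_covby_of_common_lower hne c1 c2
    constructor
    · have hset : {nu : YoungDiagram | lam ⋖ nu ∧ mu ⋖ nu} = {lam ⊔ mu} := by
        ext x
        simp only [Set.mem_setOf_eq, Set.mem_singleton_iff]
        exact ⟨fun ⟨ha, hb⟩ => eq_sup_of_common_upper hne ha hb, fun h => h ▸ ⟨d1, d2⟩⟩
      rw [hset, Nat.card_coe_set_eq, Set.ncard_singleton]
    · have hset : {nu : YoungDiagram | nu ⋖ lam ∧ nu ⋖ mu} = {lam ⊓ mu} := by
        ext x
        simp only [Set.mem_setOf_eq, Set.mem_singleton_iff]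
        exact ⟨fun ⟨ha, hb⟩ => eq_inf_of_common_lower hne ha hb, fun h => h ▸ ⟨c1, c2⟩⟩
      rw [hset, Nat.card_coe_set_eq, Set.ncard_singleton]

end YoungAux

/-- Young's lattice (Young diagrams ordered by containment) is a 1-differential
poset: every diagram is covered by exactly one more diagram than it covers
(D2 with `r = 1`), and two distinct diagrams have a common upper cover iff they
have a common lower cover, in which case there is exactly one of each (D1). -/
theorem youngs_lattice_is_one_differential :
    (∀ lam : YoungDiagram,
      Nat.card {mu : YoungDiagram | lam ⋖ mu} =
        Nat.card {mu : YoungDiagram | mu ⋖ lam} + 1) ∧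
    (∀ lam mu : YoungDiagram, lam ≠ mu →
      ((∃ nu : YoungDiagram, lam ⋖ nu ∧ mu ⋖ nu) ↔
        (∃ nu : YoungDiagram, nu ⋖ lam ∧ nu ⋖ mu)) ∧
      ((∃ nu : YoungDiagram, lam ⋖ nu ∧ mu ⋖ nu) →
        Nat.card {nu : YoungDiagram | lam ⋖ nu ∧ mu ⋖ nu} = 1 ∧
        Nat.card {nu : YoungDiagram | nu ⋖ lam ∧ nu ⋖ mu} = 1)) :=
  ⟨YoungAux.D2, YoungAux.D1⟩
end

section
/- In Young's lattice, the number of saturated chains from the empty partition to a partition λ of n equals f^λ, the number of standard Young tableaux of shape λ, and Σ_{λ ⊢ n} (f^λ)² = n!. -/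
/-- A standard Young tableau of shape `μ`: a filling of the cells of `μ` by the
numbers `0, 1, …, |μ| - 1`, each used exactly once, strictly increasing along
rows and columns (and zero outside the diagram). -/
def IsSYT (μ : YoungDiagram) (T : ℕ → ℕ → ℕ) : Prop :=
  (∀ i j : ℕ, (i, j + 1) ∈ μ → T i j < T i (j + 1)) ∧
  (∀ i j : ℕ, (i + 1, j) ∈ μ → T i j < T (i + 1) j) ∧
  Set.BijOn (fun c : ℕ × ℕ => T c.1 c.2) (↑μ.cells) (Set.Iio μ.card) ∧
  (∀ i j : ℕ, (i, j) ∉ μ → T i j = 0)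

/-- A saturated chain of length `n` in Young's lattice from `∅` to `μ`. -/
def IsSaturatedChain (n : ℕ) (μ : YoungDiagram) (c : Fin (n + 1) → YoungDiagram) : Prop :=
  c 0 = ⊥ ∧ c (Fin.last n) = μ ∧ ∀ i : Fin n, c i.castSucc ⋖ c i.succ

namespace SYTProof

noncomputable instance : DecidableEq YoungDiagram := Classical.decEq _
noncomputable instance : DecidableRel (fun a b : YoungDiagram => a ⋖ b) :=
  fun _ _ => Classical.dec _

lemma card_le_of_le {μ ν : YoungDiagram} (h : μ ≤ ν) : μ.card ≤ ν.card :=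
  Finset.card_le_card (YoungDiagram.cells_subset_iff.2 h)

lemma card_lt_of_lt {μ ν : YoungDiagram} (h : μ < ν) : μ.card < ν.card :=
  Finset.card_lt_card (YoungDiagram.cells_ssubset_iff.2 h)

lemma yd_ext {μ ν : YoungDiagram} (h : μ.cells = ν.cells) : μ = ν := by
  cases μ; cases ν; simpa using h

/-- Adding a minimal missing cell. -/
lemma exists_step {μ ν : YoungDiagram} (h : μ < ν) :
    ∃ ρ : YoungDiagram, μ ≤ ρ ∧ ρ ≤ ν ∧ ρ.card = μ.card + 1 := by
  have hss : μ.cells ⊂ ν.cells := YoungDiagram.cells_ssubset_iff.2 h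
  have hne : (ν.cells \ μ.cells).Nonempty := by
    rw [Finset.sdiff_nonempty]; exact fun hsub => hss.2 hsub
  obtain ⟨x, hx, hmin⟩ := Finset.exists_min_image (ν.cells \ μ.cells) (fun c => c.1 + c.2) hne
  rw [Finset.mem_sdiff] at hx
  have hxν : x ∈ ν := hx.1
  have hxμ : x ∉ μ := fun hc => hx.2 ((YoungDiagram.mem_cells x).2 hc)
  have hlow : IsLowerSet (↑(insert x μ.cells) : Set (ℕ × ℕ)) := by
    intro a b hba ha
    simp only [Finset.coe_insert, Set.mem_insert_iff, Finset.mem_coe,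
      YoungDiagram.mem_cells] at ha ⊢
    rcases ha with rfl | ha
    · -- b ≤ a, and a is the new cell
      by_cases hbx : b = a
      · exact Or.inl hbx
      · right
        have hbν : b ∈ ν := ν.isLowerSet hba hxν
        by_contra hbμ
        have hmem : b ∈ ν.cells \ μ.cells := Finset.mem_sdiff.2
          ⟨(YoungDiagram.mem_cells b).2 hbν, fun hc => hbμ ((YoungDiagram.mem_cells b).1 hc)⟩
        have h1 : b.1 ≤ a.1 := hba.1
        have h2 : b.2 ≤ a.2 := hba.2
        have hlt : b.1 + b.2 < a.1 + a.2 := by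
          rcases Nat.lt_or_ge (b.1 + b.2) (a.1 + a.2) with h | h
          · exact h
          · exact absurd (Prod.ext (by omega) (by omega)) hbx
        have := hmin b hmem
        omega
    · exact Or.inr (μ.isLowerSet hba ha)
  refine ⟨⟨insert x μ.cells, hlow⟩, ?_, ?_, ?_⟩
  · rw [← YoungDiagram.cells_subset_iff]; exact Finset.subset_insert _ _
  · rw [← YoungDiagram.cells_subset_iff]
    exact Finset.insert_subset hx.1 hss.1
  · show (insert x μ.cells).card = μ.cells.card + 1
    exact Finset.card_insert_of_notMem hx.2

lemma covby_iff {μ ν : YoungDiagram} : μ ⋖ ν ↔ μ ≤ ν ∧ ν.card = μ.card + 1 := by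
  constructor
  · rintro ⟨hlt, hnb⟩
    obtain ⟨ρ, h1, h2, h3⟩ := exists_step hlt
    have hρν : ρ = ν := by
      rcases lt_or_eq_of_le h2 with hc | hc
      · have hμρ : μ < ρ := lt_of_le_of_ne h1 (by
          rintro rfl
          exact absurd h3 (by omega))
        exact absurd hc (hnb hμρ)
      · exact hc
    exact ⟨hlt.le, by rw [← hρν, h3]⟩
  · rintro ⟨hle, hcard⟩
    have hlt : μ < ν := lt_of_le_of_ne hle (by
      rintro rfl; omega)
    refine ⟨hlt, fun x hx1 hx2 => ?_⟩
    have := card_lt_of_lt hx1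
    have := card_lt_of_lt hx2
    omega

/-- A cover adds exactly one cell. -/
lemma covby_cells {μ ν : YoungDiagram} (h : μ ⋖ ν) :
    ∃ x, x ∉ μ ∧ ν.cells = insert x μ.cells := by
  obtain ⟨hle, hcard⟩ := covby_iff.1 h
  have hsub : μ.cells ⊆ ν.cells := YoungDiagram.cells_subset_iff.2 hle
  have h1 : (ν.cells \ μ.cells).card = 1 := by
    rw [Finset.card_sdiff_of_subset hsub]
    change ν.cells.card - μ.cells.card = 1
    have : ν.cells.card = μ.cells.card + 1 := hcard
    omega
  obtain ⟨x, hx⟩ := Finset.card_eq_one.1 h1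
  have hxm : x ∈ ν.cells \ μ.cells := hx ▸ Finset.mem_singleton_self x
  rw [Finset.mem_sdiff] at hxm
  refine ⟨x, fun hc => hxm.2 ((YoungDiagram.mem_cells x).2 hc), ?_⟩
  apply Finset.Subset.antisymm
  · intro y hy
    by_cases hyμ : y ∈ μ.cells
    · exact Finset.mem_insert_of_mem hyμ
    · have : y ∈ ν.cells \ μ.cells := Finset.mem_sdiff.2 ⟨hy, hyμ⟩
      rw [hx, Finset.mem_singleton] at this
      exact this ▸ Finset.mem_insert_self _ _
  · exact Finset.insert_subset hxm.1 hsub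

/-- Membership below the new cell of a cover. -/
lemma covby_mem_of_le {μ ν : YoungDiagram} (h : μ ⋖ ν) {x y : ℕ × ℕ}
    (hx : x ∉ μ) (hcells : ν.cells = insert x μ.cells)
    (hyx : y ≤ x) (hne : y ≠ x) : y ∈ μ := by
  have hxν : x ∈ ν := (YoungDiagram.mem_cells x).1 (hcells ▸ Finset.mem_insert_self _ _)
  have hyν : y ∈ ν := ν.isLowerSet hyx hxν
  have := (YoungDiagram.mem_cells y).2 hyν
  rw [hcells, Finset.mem_insert] at this
  rcases this with h' | h'
  · exact absurd h' hne
  · exact (YoungDiagram.mem_cells y).1 h'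

/-- The new cell of a cover is a corner of ν. -/
lemma covby_corner {μ ν : YoungDiagram} (h : μ ⋖ ν) {x : ℕ × ℕ}
    (hx : x ∉ μ) (hcells : ν.cells = insert x μ.cells) :
    (x.1, x.2 + 1) ∉ ν ∧ (x.1 + 1, x.2) ∉ ν := by
  constructor
  · intro hc
    have : (x.1, x.2 + 1) ∈ ν.cells := (YoungDiagram.mem_cells _).2 hc
    rw [hcells, Finset.mem_insert] at this
    rcases this with h' | h'
    · have : x.2 = x.2 + 1 := congrArg Prod.snd h'.symm
      omega
    · exact hx (μ.isLowerSet (by constructor <;> simp) ((YoungDiagram.mem_cells _).1 h'))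
  · intro hc
    have : (x.1 + 1, x.2) ∈ ν.cells := (YoungDiagram.mem_cells _).2 hc
    rw [hcells, Finset.mem_insert] at this
    rcases this with h' | h'
    · have : x.1 = x.1 + 1 := congrArg Prod.fst h'.symm
      omega
    · exact hx (μ.isLowerSet (by constructor <;> simp) ((YoungDiagram.mem_cells _).1 h'))


/-! ### Finiteness -/

lemma finite_le (μ : YoungDiagram) : {ρ : YoungDiagram | ρ ≤ μ}.Finite := by
  have : Finite {ρ : YoungDiagram // ρ ≤ μ} := by
    refine Finite.of_injective
      (fun ρ => (⟨ρ.1.cells, Finset.mem_powerset.2 (YoungDiagram.cells_subset_iff.2 ρ.2)⟩ :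
        ↥(μ.cells.powerset))) ?_
    intro a b hab
    exact Subtype.ext (yd_ext (congrArg Subtype.val hab))
  exact Set.finite_coe_iff.mp this

lemma cell_bound {μ : YoungDiagram} {n : ℕ} (hcard : μ.card = n) {i j : ℕ}
    (h : (i, j) ∈ μ) : i < n ∧ j < n := by
  have h1 : i < μ.colLen j := YoungDiagram.mem_iff_lt_colLen.1 h
  have h2 : j < μ.rowLen i := YoungDiagram.mem_iff_lt_rowLen.1 h
  have hc : μ.colLen j ≤ n := by
    rw [μ.colLen_eq_card, ← hcard]
    exact Finset.card_le_card (fun c hc => (YoungDiagram.mem_cells c).2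
      ((YoungDiagram.mem_col_iff.1 hc).1))
  have hr : μ.rowLen i ≤ n := by
    rw [μ.rowLen_eq_card, ← hcard]
    exact Finset.card_le_card (fun c hc => (YoungDiagram.mem_cells c).2
      ((YoungDiagram.mem_row_iff.1 hc).1))
  omega

lemma finite_card_eq (n : ℕ) : {μ : YoungDiagram | μ.card = n}.Finite := by
  have : Finite {μ : YoungDiagram // μ.card = n} := by
    refine Finite.of_injective
      (fun μ => (⟨μ.1.cells, Finset.mem_powerset.2 ?_⟩ :
        ↥((Finset.range n ×ˢ Finset.range n).powerset))) ?_
    · intro c hc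
      obtain ⟨i, j⟩ := c
      have := cell_bound μ.2 ((YoungDiagram.mem_cells _).1 hc)
      simp [Finset.mem_product, this.1, this.2]
    · intro a b hab
      exact Subtype.ext (yd_ext (congrArg Subtype.val hab))
  exact Set.finite_coe_iff.mp this

lemma finite_ucov (ν : YoungDiagram) : {l : YoungDiagram | ν ⋖ l}.Finite :=
  (finite_card_eq (ν.card + 1)).subset (fun l hl => (covby_iff.1 hl).2)

lemma finite_dcov (ν : YoungDiagram) : {ρ : YoungDiagram | ρ ⋖ ν}.Finite :=
  (finite_le ν).subset (fun ρ hρ => hρ.1.le)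

noncomputable def level (n : ℕ) : Finset YoungDiagram := (finite_card_eq n).toFinset
noncomputable def ucov (ν : YoungDiagram) : Finset YoungDiagram := (finite_ucov ν).toFinset
noncomputable def dcov (ν : YoungDiagram) : Finset YoungDiagram := (finite_dcov ν).toFinset

@[simp] lemma mem_level {n : ℕ} {μ : YoungDiagram} : μ ∈ level n ↔ μ.card = n := by
  simp [level]
@[simp] lemma mem_ucov {ν μ : YoungDiagram} : μ ∈ ucov ν ↔ ν ⋖ μ := by
  simp [ucov]
@[simp] lemma mem_dcov {ν μ : YoungDiagram} : μ ∈ dcov ν ↔ μ ⋖ ν := by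
  simp [dcov]

/-! ### Corner counting -/

/-- Rows where a cell can be added. -/
def Addable (ν : YoungDiagram) (i : ℕ) : Prop := i = 0 ∨ ν.rowLen i < ν.rowLen (i - 1)
/-- Rows where a cell can be removed. -/
def Removable (ν : YoungDiagram) (i : ℕ) : Prop := ν.rowLen (i + 1) < ν.rowLen i

instance (ν i) : Decidable (Addable ν i) := by unfold Addable; infer_instance
instance (ν i) : Decidable (Removable ν i) := by unfold Removable; infer_instance

noncomputable def addSet (ν : YoungDiagram) : Finset ℕ :=
  (Finset.range (ν.colLen 0 + 1)).filter (Addable ν)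
noncomputable def remSet (ν : YoungDiagram) : Finset ℕ :=
  (Finset.range (ν.colLen 0)).filter (Removable ν)

lemma addSet_card (ν : YoungDiagram) : (addSet ν).card = (remSet ν).card + 1 := by
  have h0 : (0 : ℕ) ∈ addSet ν := by
    simp [addSet, Addable]
  have himg : addSet ν = insert 0 ((remSet ν).image (· + 1)) := by
    ext j
    simp only [addSet, remSet, Finset.mem_filter, Finset.mem_range, Finset.mem_insert,
      Finset.mem_image]
    constructor
    · rintro ⟨hj, hadd⟩
      rcases hadd with rfl | hlt
      · exact Or.inl rfl
      · right
        have hj1 : 1 ≤ j := by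
          by_contra hc
          interval_cases j
          · simp at hlt
        refine ⟨j - 1, ⟨⟨?_, ?_⟩, by omega⟩⟩
        · -- j - 1 < colLen 0 : rowLen (j-1) > 0
          have hpos : 0 < ν.rowLen (j - 1) := lt_of_le_of_lt (Nat.zero_le _) hlt
          have : (j - 1, 0) ∈ ν := YoungDiagram.mem_iff_lt_rowLen.2 hpos
          exact YoungDiagram.mem_iff_lt_colLen.1 this
        · show ν.rowLen (j - 1 + 1) < ν.rowLen (j - 1)
          have : j - 1 + 1 = j := by omega
          rw [this]; exact hlt
    · rintro (rfl | ⟨i, ⟨⟨hi, hrem⟩, rfl⟩⟩)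
      · exact ⟨by omega, Or.inl rfl⟩
      · refine ⟨by omega, Or.inr ?_⟩
        show ν.rowLen (i + 1) < ν.rowLen (i + 1 - 1)
        simpa using (show ν.rowLen (i + 1) < ν.rowLen i from hrem)
  rw [himg, Finset.card_insert_of_notMem (by simp), Finset.card_image_of_injective _
    (fun a b h => by omega)]

/-- The diagram obtained by adding a cell at end of row `i`. -/
lemma isLowerSet_add (ν : YoungDiagram) (i : ℕ) (h : Addable ν i) :
    IsLowerSet (↑(insert (i, ν.rowLen i) ν.cells) : Set (ℕ × ℕ)) := by
  intro a b hba ha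
  simp only [Finset.coe_insert, Set.mem_insert_iff, Finset.mem_coe,
    YoungDiagram.mem_cells] at ha ⊢
  rcases ha with rfl | ha
  · obtain ⟨b1, b2⟩ := b
    have hb1 : b1 ≤ i := hba.1
    have hb2 : b2 ≤ ν.rowLen i := hba.2
    by_cases hbi : b1 = i
    · subst hbi
      by_cases hb2' : b2 = ν.rowLen b1
      · exact Or.inl (by rw [hb2'])
      · exact Or.inr (YoungDiagram.mem_iff_lt_rowLen.2 (by omega))
    · right
      have hlt : b1 < i := by omega
      have hi1 : ν.rowLen i < ν.rowLen (i - 1) := by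
        rcases h with h | h
        · omega
        · exact h
      have : ν.rowLen (i - 1) ≤ ν.rowLen b1 := ν.rowLen_anti b1 (i - 1) (by omega)
      exact YoungDiagram.mem_iff_lt_rowLen.2 (by omega)
  · exact Or.inr (ν.isLowerSet hba ha)

noncomputable def addRow (ν : YoungDiagram) (i : ℕ) (h : Addable ν i) : YoungDiagram :=
  ⟨insert (i, ν.rowLen i) ν.cells, isLowerSet_add ν i h⟩

lemma addRow_covers (ν : YoungDiagram) (i : ℕ) (h : Addable ν i) : ν ⋖ addRow ν i h := by
  rw [covby_iff]
  constructor
  · rw [← YoungDiagram.cells_subset_iff]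
    exact Finset.subset_insert _ _
  · show (insert (i, ν.rowLen i) ν.cells).card = ν.cells.card + 1
    refine Finset.card_insert_of_notMem (fun hc => ?_)
    have := YoungDiagram.mem_iff_lt_rowLen.1 ((YoungDiagram.mem_cells _).1 hc)
    omega

lemma mem_addSet_addable {ν : YoungDiagram} {i : ℕ} (h : i ∈ addSet ν) : Addable ν i :=
  (Finset.mem_filter.1 h).2

noncomputable def addRow' (ν : YoungDiagram) (i : ℕ) : YoungDiagram :=
  if h : Addable ν i then addRow ν i h else ⊥

lemma addRow'_cells {ν : YoungDiagram} {i : ℕ} (h : Addable ν i) :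
    (addRow' ν i).cells = insert (i, ν.rowLen i) ν.cells := by
  simp only [addRow', dif_pos h]; rfl

lemma ucov_card (ν : YoungDiagram) : (ucov ν).card = (addSet ν).card := by
  refine (Finset.card_bij (fun i _ => addRow' ν i) ?_ ?_ ?_).symm
  · intro i hi
    have h := mem_addSet_addable hi
    simp only [addRow', dif_pos h]
    exact mem_ucov.2 (addRow_covers ν i h)
  · intro a ha b hb hab
    have hA := mem_addSet_addable ha
    have hB := mem_addSet_addable hb
    have hmem : (a, ν.rowLen a) ∈ (addRow' ν b).cells := by
      rw [← hab, addRow'_cells hA]; exact Finset.mem_insert_self _ _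
    rw [addRow'_cells hB] at hmem
    rcases Finset.mem_insert.1 hmem with h | h
    · exact (Prod.mk.injEq .. ▸ h).1
    · have := YoungDiagram.mem_iff_lt_rowLen.1 ((YoungDiagram.mem_cells _).1 h)
      omega
  · intro l hl
    have hcov : ν ⋖ l := mem_ucov.1 hl
    obtain ⟨x, hx, hcells⟩ := covby_cells hcov
    obtain ⟨i, j⟩ := x
    have hge : ν.rowLen i ≤ j := by
      by_contra hc
      exact hx (YoungDiagram.mem_iff_lt_rowLen.2 (by omega))
    have hle2 : j ≤ ν.rowLen i := by
      by_contra hc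
      have hmem : (i, j - 1) ∈ ν := covby_mem_of_le hcov hx hcells
        (by constructor <;> simp <;> omega) (by simp; omega)
      have := YoungDiagram.mem_iff_lt_rowLen.1 hmem
      omega
    have hj : j = ν.rowLen i := le_antisymm hle2 hge
    subst hj
    have hadd : Addable ν i := by
      rcases Nat.eq_zero_or_pos i with rfl | hi
      · exact Or.inl rfl
      · right
        have hmem : (i - 1, ν.rowLen i) ∈ ν := covby_mem_of_le hcov hx hcells
          (by constructor <;> simp <;> omega) (by simp; omega)
        exact YoungDiagram.mem_iff_lt_rowLen.1 hmem
    refine ⟨i, ?_, ?_⟩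
    · simp only [addSet, Finset.mem_filter, Finset.mem_range]
      refine ⟨?_, hadd⟩
      rcases Nat.eq_zero_or_pos i with rfl | hi
      · omega
      · have hpos : 0 < ν.rowLen (i - 1) := by
          rcases hadd with h | h
          · omega
          · omega
        have h2 : (i - 1, 0) ∈ ν := YoungDiagram.mem_iff_lt_rowLen.2 hpos
        have := YoungDiagram.mem_iff_lt_colLen.1 h2
        omega
    · exact yd_ext (by rw [addRow'_cells hadd]; exact hcells.symm)


lemma mem_remSet_removable {ν : YoungDiagram} {i : ℕ} (h : i ∈ remSet ν) : Removable ν i :=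
  (Finset.mem_filter.1 h).2

lemma isLowerSet_rem (ν : YoungDiagram) (i : ℕ) (h : Removable ν i) :
    IsLowerSet (↑(ν.cells.erase (i, ν.rowLen i - 1)) : Set (ℕ × ℕ)) := by
  intro a b hba ha
  simp only [Finset.coe_erase, Set.mem_diff, Finset.mem_coe, YoungDiagram.mem_cells,
    Set.mem_singleton_iff] at ha ⊢
  obtain ⟨haν, hane⟩ := ha
  refine ⟨ν.isLowerSet hba haν, ?_⟩
  rintro rfl
  obtain ⟨a1, a2⟩ := a
  have hb1 : i ≤ a1 := hba.1
  have hb2 : ν.rowLen i - 1 ≤ a2 := hba.2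
  have ha2 : a2 < ν.rowLen a1 := YoungDiagram.mem_iff_lt_rowLen.1 haν
  have hra : ν.rowLen a1 ≤ ν.rowLen i := ν.rowLen_anti i a1 hb1
  have hrem : ν.rowLen (i + 1) < ν.rowLen i := h
  by_cases h1 : a1 = i
  · subst h1
    have : a2 = ν.rowLen a1 - 1 := by omega
    exact hane (by rw [this])
  · have : i + 1 ≤ a1 := by omega
    have : ν.rowLen a1 ≤ ν.rowLen (i + 1) := ν.rowLen_anti (i + 1) a1 this
    omega

noncomputable def remRow' (ν : YoungDiagram) (i : ℕ) : YoungDiagram :=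
  if h : Removable ν i then ⟨ν.cells.erase (i, ν.rowLen i - 1), isLowerSet_rem ν i h⟩ else ⊥

lemma remRow'_cells {ν : YoungDiagram} {i : ℕ} (h : Removable ν i) :
    (remRow' ν i).cells = ν.cells.erase (i, ν.rowLen i - 1) := by
  simp only [remRow', dif_pos h]

lemma remRow'_covers {ν : YoungDiagram} {i : ℕ} (h : Removable ν i) : remRow' ν i ⋖ ν := by
  have hpos : 0 < ν.rowLen i := lt_of_le_of_lt (Nat.zero_le _) h
  have hmem : (i, ν.rowLen i - 1) ∈ ν.cells :=
    (YoungDiagram.mem_cells _).2 (YoungDiagram.mem_iff_lt_rowLen.2 (by omega))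
  rw [covby_iff]
  constructor
  · rw [← YoungDiagram.cells_subset_iff, remRow'_cells h]
    exact Finset.erase_subset _ _
  · show ν.cells.card = (remRow' ν i).cells.card + 1
    rw [remRow'_cells h, Finset.card_erase_of_mem hmem]
    have : 0 < ν.cells.card := Finset.card_pos.2 ⟨_, hmem⟩
    omega

lemma dcov_card (ν : YoungDiagram) : (dcov ν).card = (remSet ν).card := by
  refine (Finset.card_bij (fun i _ => remRow' ν i) ?_ ?_ ?_).symm
  · intro i hi
    exact mem_dcov.2 (remRow'_covers (mem_remSet_removable hi))
  · intro a ha b hb hab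
    have hA := mem_remSet_removable ha
    have hB := mem_remSet_removable hb
    by_contra hne
    have hposa : 0 < ν.rowLen a := lt_of_le_of_lt (Nat.zero_le _) hA
    have hmema : (a, ν.rowLen a - 1) ∈ ν.cells :=
      (YoungDiagram.mem_cells _).2 (YoungDiagram.mem_iff_lt_rowLen.2 (by omega))
    have h1 : (a, ν.rowLen a - 1) ∉ (remRow' ν a).cells := by
      rw [remRow'_cells hA]; exact Finset.notMem_erase _ _
    have h2 : (a, ν.rowLen a - 1) ∈ (remRow' ν b).cells := by
      rw [remRow'_cells hB, Finset.mem_erase]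
      exact ⟨by simp [Prod.ext_iff]; intro h; omega, hmema⟩
    rw [hab] at h1
    exact h1 h2
  · intro ρ hρ
    have hcov : ρ ⋖ ν := mem_dcov.1 hρ
    obtain ⟨x, hx, hcells⟩ := covby_cells hcov
    have hxν : x ∈ ν := (YoungDiagram.mem_cells x).1 (hcells ▸ Finset.mem_insert_self _ _)
    obtain ⟨hcor1, hcor2⟩ := covby_corner hcov hx hcells
    obtain ⟨i, j⟩ := x
    have hjlt : j < ν.rowLen i := YoungDiagram.mem_iff_lt_rowLen.1 hxν
    have hj1 : ν.rowLen i ≤ j + 1 := by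
      by_contra hc
      exact hcor1 (YoungDiagram.mem_iff_lt_rowLen.2 (by simp; omega))
    have hj : j = ν.rowLen i - 1 := by omega
    have hrem : Removable ν i := by
      show ν.rowLen (i + 1) < ν.rowLen i
      have : ν.rowLen (i + 1) ≤ j := by
        by_contra hc
        exact hcor2 (YoungDiagram.mem_iff_lt_rowLen.2 (by simp; omega))
      omega
    refine ⟨i, ?_, ?_⟩
    · simp only [remSet, Finset.mem_filter, Finset.mem_range]
      refine ⟨?_, hrem⟩
      have : (i, 0) ∈ ν := ν.up_left_mem le_rfl (Nat.zero_le _) hxν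
      exact YoungDiagram.mem_iff_lt_colLen.1 this
    · refine yd_ext ?_
      rw [remRow'_cells hrem, ← hj, hcells]
      rw [Finset.erase_insert (fun hc => hx ((YoungDiagram.mem_cells _).1 hc))]

lemma corner_count (ν : YoungDiagram) : (ucov ν).card = (dcov ν).card + 1 := by
  rw [ucov_card, dcov_card, addSet_card]


lemma eq_of_le_of_card_le {μ ν : YoungDiagram} (h : μ ≤ ν) (hc : ν.card ≤ μ.card) : μ = ν :=
  yd_ext (Finset.eq_of_subset_of_card_le (YoungDiagram.cells_subset_iff.2 h) hc)

lemma sup_inf_card (ν κ : YoungDiagram) :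
    (ν ⊔ κ).card + (ν ⊓ κ).card = ν.card + κ.card := by
  show (ν ⊔ κ).cells.card + (ν ⊓ κ).cells.card = _
  rw [YoungDiagram.cells_sup, YoungDiagram.cells_inf]
  exact Finset.card_union_add_card_inter _ _

lemma common_cov_card {ν κ : YoungDiagram} (hne : ν ≠ κ) (hc : ν.card = κ.card) :
    (ucov ν ∩ ucov κ).card = (dcov ν ∩ dcov κ).card := by
  set n := ν.card with hn
  have hsup_lt : ν < ν ⊔ κ := by
    rcases lt_or_eq_of_le (le_sup_left : ν ≤ ν ⊔ κ) with h | h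
    · exact h
    · exfalso
      have hκν : κ ≤ ν := by rw [h]; exact le_sup_right
      exact hne (eq_of_le_of_card_le hκν (by omega)).symm
  have hsup : n + 1 ≤ (ν ⊔ κ).card :=
    Nat.succ_le_of_lt (Finset.card_lt_card (YoungDiagram.cells_ssubset_iff.2 hsup_lt))
  have hsum : (ν ⊔ κ).card + (ν ⊓ κ).card = n + n := by rw [sup_inf_card]; omega
  have hinf : (ν ⊓ κ).card + 1 ≤ n := by omega
  by_cases hq : (ν ⊔ κ).card = n + 1
  · have hqi : (ν ⊓ κ).card = n - 1 := by omega
    have hn1 : 1 ≤ n := by omega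
    have hu : ucov ν ∩ ucov κ = {ν ⊔ κ} := by
      apply Finset.Subset.antisymm
      · intro l hl
        rw [Finset.mem_inter, mem_ucov, mem_ucov] at hl
        obtain ⟨h1, h2⟩ := hl
        have hle : ν ⊔ κ ≤ l := sup_le h1.le h2.le
        have : l = ν ⊔ κ := (eq_of_le_of_card_le hle (by
          have := (covby_iff.1 h1).2; omega)).symm
        simp [this]
      · intro l hl
        rw [Finset.mem_singleton] at hl
        subst hl
        rw [Finset.mem_inter, mem_ucov, mem_ucov, covby_iff, covby_iff]
        exact ⟨⟨le_sup_left, by omega⟩, ⟨le_sup_right, by omega⟩⟩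
    have hd : dcov ν ∩ dcov κ = {ν ⊓ κ} := by
      apply Finset.Subset.antisymm
      · intro ρ hρ
        rw [Finset.mem_inter, mem_dcov, mem_dcov] at hρ
        obtain ⟨h1, h2⟩ := hρ
        have hle : ρ ≤ ν ⊓ κ := le_inf h1.le h2.le
        have hcard : ρ.card + 1 = n := by
          have := (covby_iff.1 h1).2; omega
        have : ρ = ν ⊓ κ := eq_of_le_of_card_le hle (by omega)
        simp [this]
      · intro ρ hρ
        rw [Finset.mem_singleton] at hρ
        subst hρ
        rw [Finset.mem_inter, mem_dcov, mem_dcov, covby_iff, covby_iff]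
        exact ⟨⟨inf_le_left, by omega⟩, ⟨inf_le_right, by omega⟩⟩
    rw [hu, hd, Finset.card_singleton, Finset.card_singleton]
  · have hu : ucov ν ∩ ucov κ = ∅ := by
      rw [Finset.eq_empty_iff_forall_notMem]
      intro l hl
      rw [Finset.mem_inter, mem_ucov, mem_ucov] at hl
      obtain ⟨h1, h2⟩ := hl
      have hle : ν ⊔ κ ≤ l := sup_le h1.le h2.le
      have h3 := (covby_iff.1 h1).2
      have := card_le_of_le hle
      omega
    have hd : dcov ν ∩ dcov κ = ∅ := by
      rw [Finset.eq_empty_iff_forall_notMem]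
      intro ρ hρ
      rw [Finset.mem_inter, mem_dcov, mem_dcov] at hρ
      obtain ⟨h1, h2⟩ := hρ
      have hle : ρ ≤ ν ⊓ κ := le_inf h1.le h2.le
      have h3 := (covby_iff.1 h1).2
      have h4 := card_le_of_le hle
      omega
    rw [hu, hd]

/-! ### basic facts about SYT -/

lemma syt_maps {μ : YoungDiagram} {T : ℕ → ℕ → ℕ} (hT : IsSYT μ T) {c : ℕ × ℕ}
    (hc : c ∈ μ) : T c.1 c.2 < μ.card :=
  hT.2.2.1.1 ((YoungDiagram.mem_cells c).2 hc)

lemma syt_inj {μ : YoungDiagram} {T : ℕ → ℕ → ℕ} (hT : IsSYT μ T) {c d : ℕ × ℕ}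
    (hc : c ∈ μ) (hd : d ∈ μ) (h : T c.1 c.2 = T d.1 d.2) : c = d :=
  hT.2.2.1.2.1 ((YoungDiagram.mem_cells c).2 hc) ((YoungDiagram.mem_cells d).2 hd) h

lemma syt_surj {μ : YoungDiagram} {T : ℕ → ℕ → ℕ} (hT : IsSYT μ T) {v : ℕ}
    (hv : v < μ.card) : ∃ c, c ∈ μ ∧ T c.1 c.2 = v := by
  obtain ⟨c, hc, hc2⟩ := hT.2.2.1.2.2 (Set.mem_Iio.2 hv)
  exact ⟨c, (YoungDiagram.mem_cells c).1 hc, hc2⟩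

lemma row_le {μ : YoungDiagram} {T : ℕ → ℕ → ℕ} (hT : IsSYT μ T) (k i j : ℕ)
    (h : (i, j + k) ∈ μ) : T i j ≤ T i (j + k) := by
  induction k with
  | zero => exact le_refl _
  | succ m ih =>
    show T i j ≤ T i (j + m + 1)
    have hmem : (i, j + m) ∈ μ := μ.up_left_mem le_rfl (by omega) h
    exact le_trans (ih hmem) (le_of_lt (hT.1 i (j + m) h))

lemma col_le {μ : YoungDiagram} {T : ℕ → ℕ → ℕ} (hT : IsSYT μ T) (k i j : ℕ)
    (h : (i + k, j) ∈ μ) : T i j ≤ T (i + k) j := by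
  induction k with
  | zero => exact le_refl _
  | succ m ih =>
    show T i j ≤ T (i + m + 1) j
    have hmem : (i + m, j) ∈ μ := μ.up_left_mem (by omega) le_rfl h
    exact le_trans (ih hmem) (le_of_lt (hT.2.1 (i + m) j h))

lemma syt_lt {μ : YoungDiagram} {T : ℕ → ℕ → ℕ} (hT : IsSYT μ T) {x y : ℕ × ℕ}
    (hy : y ∈ μ) (hxy : x ≤ y) (hne : x ≠ y) : T x.1 x.2 < T y.1 y.2 := by
  obtain ⟨a, b⟩ := x
  obtain ⟨c, d⟩ := y
  show T a b < T c d
  have hac : a ≤ c := hxy.1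
  have hbd : b ≤ d := hxy.2
  by_cases hb : b < d
  · -- T a b ≤ T a (d-1) < T a d ≤ T c d
    have had : (a, d) ∈ μ := μ.up_left_mem hac le_rfl hy
    have had1 : (a, d - 1) ∈ μ := μ.up_left_mem le_rfl (by omega) had
    have h1 : T a b ≤ T a (d - 1) := by
      have := row_le hT (d - 1 - b) a b (by rw [show b + (d-1-b) = d - 1 by omega]; exact had1)
      rwa [show b + (d-1-b) = d - 1 by omega] at this
    have h2 : T a (d - 1) < T a d := by
      have := hT.1 a (d - 1) (by rw [show d - 1 + 1 = d by omega]; exact had)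
      rwa [show d - 1 + 1 = d by omega] at this
    have h3 : T a d ≤ T c d := by
      have := col_le hT (c - a) a d (by rw [show a + (c-a) = c by omega]; exact hy)
      rwa [show a + (c-a) = c by omega] at this
    omega
  · have hbd' : b = d := by omega
    subst hbd'
    have hac' : a < c := by
      rcases Nat.lt_or_ge a c with h | h
      · exact h
      · exact absurd (by omega : a = c) (fun hc => hne (by rw [hc]))
    have hc1 : (c - 1, b) ∈ μ := μ.up_left_mem (by omega) le_rfl hy
    have h1 : T a b ≤ T (c - 1) b := by
      have := col_le hT (c - 1 - a) a b (by rw [show a + (c-1-a) = c - 1 by omega]; exact hc1)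
      rwa [show a + (c-1-a) = c - 1 by omega] at this
    have h2 : T (c - 1) b < T c b := by
      have := hT.2.1 (c - 1) b (by rw [show c - 1 + 1 = c by omega]; exact hy)
      rwa [show c - 1 + 1 = c by omega] at this
    omega

instance sytFinite (μ : YoungDiagram) : Finite {T : ℕ → ℕ → ℕ // IsSYT μ T} := by
  refine Finite.of_injective
    (fun T => (fun c : ↥μ.cells => (⟨T.1 c.1.1 c.1.2, by
      have := syt_maps T.2 ((YoungDiagram.mem_cells c.1).1 c.2)
      omega⟩ : Fin (μ.card + 1)))) ?_
  intro S T hST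
  apply Subtype.ext
  funext i j
  by_cases h : (i, j) ∈ μ
  · have := congrFun hST ⟨(i, j), (YoungDiagram.mem_cells _).2 h⟩
    simpa using congrArg Fin.val this
  · rw [S.2.2.2.2 i j h, T.2.2.2.2 i j h]

/-! ### the insertion bijection -/

lemma Iio_succ_nat (n : ℕ) : Set.Iio (n + 1) = insert n (Set.Iio n) := by
  ext m; simp [Set.mem_Iio]

noncomputable def newCell {ν μ : YoungDiagram} (h : ν ⋖ μ) : ℕ × ℕ :=
  (covby_cells h).choose

lemma newCell_spec {ν μ : YoungDiagram} (h : ν ⋖ μ) :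
    newCell h ∉ ν ∧ μ.cells = insert (newCell h) ν.cells :=
  (covby_cells h).choose_spec

noncomputable def insT {ν μ : YoungDiagram} (h : ν ⋖ μ) (T : ℕ → ℕ → ℕ) : ℕ → ℕ → ℕ :=
  fun a b => if (a, b) = newCell h then ν.card else T a b

lemma insT_isSYT {ν μ : YoungDiagram} (h : ν ⋖ μ) {T : ℕ → ℕ → ℕ} (hT : IsSYT ν T) :
    IsSYT μ (insT h T) := by
  obtain ⟨hx, hcells⟩ := newCell_spec h
  set x := newCell h with hxdef
  have hcard : μ.card = ν.card + 1 := (covby_iff.1 h).2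
  have hmemμ : ∀ c : ℕ × ℕ, c ∈ μ ↔ c = x ∨ c ∈ ν := by
    intro c
    rw [← YoungDiagram.mem_cells, hcells, Finset.mem_insert, YoungDiagram.mem_cells]
  have hval : ∀ a b : ℕ, (a, b) ≠ x → insT h T a b = T a b := by
    intro a b hne
    show (if (a, b) = newCell h then ν.card else T a b) = T a b
    rw [← hxdef, if_neg hne]
  have hvalx : ∀ a b : ℕ, (a, b) = x → insT h T a b = ν.card := by
    intro a b he
    show (if (a, b) = newCell h then ν.card else T a b) = ν.card
    rw [← hxdef, if_pos he]
  refine ⟨?_, ?_, ?_, ?_⟩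
  · intro i j hmem
    by_cases h1 : (i, j + 1) = x
    · have h0 : (i, j) ≠ x := by
        intro hc; rw [← h1] at hc
        have := congrArg Prod.snd hc; simp at this
      have h0m : (i, j) ∈ ν := covby_mem_of_le h hx hcells
        (by rw [← h1]; exact ⟨le_rfl, by omega⟩) h0
      have hlt := syt_maps hT h0m
      rw [hval i j h0, hvalx i (j + 1) h1]
      simpa using hlt
    · have h1m : (i, j + 1) ∈ ν := by
        rcases (hmemμ _).1 hmem with hc | hc
        · exact absurd hc h1
        · exact hc
      by_cases h0 : (i, j) = x
      · exfalso
        have hcor := (covby_corner h hx hcells).1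
        rw [← h0] at hcor
        exact hcor ((hmemμ _).2 (Or.inr h1m))
      · rw [hval i j h0, hval i (j + 1) h1]
        exact hT.1 i j h1m
  · intro i j hmem
    by_cases h1 : (i + 1, j) = x
    · have h0 : (i, j) ≠ x := by
        intro hc; rw [← h1] at hc
        have := congrArg Prod.fst hc; simp at this
      have h0m : (i, j) ∈ ν := covby_mem_of_le h hx hcells
        (by rw [← h1]; exact ⟨by omega, le_rfl⟩) h0
      have hlt := syt_maps hT h0m
      rw [hval i j h0, hvalx (i + 1) j h1]
      simpa using hlt
    · have h1m : (i + 1, j) ∈ ν := by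
        rcases (hmemμ _).1 hmem with hc | hc
        · exact absurd hc h1
        · exact hc
      by_cases h0 : (i, j) = x
      · exfalso
        have hcor := (covby_corner h hx hcells).2
        rw [← h0] at hcor
        exact hcor ((hmemμ _).2 (Or.inr h1m))
      · rw [hval i j h0, hval (i + 1) j h1]
        exact hT.2.1 i j h1m
  · have hbase : Set.BijOn (fun c : ℕ × ℕ => insT h T c.1 c.2) (↑ν.cells) (Set.Iio ν.card) := by
      refine hT.2.2.1.congr ?_
      intro c hc
      have hcne : ((c.1, c.2) : ℕ × ℕ) ≠ x := fun he => hx (by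
        have : c = x := he
        rw [← this]; exact (YoungDiagram.mem_cells c).1 hc)
      exact (hval c.1 c.2 hcne).symm
    have hnot : insT h T x.1 x.2 ∉ Set.Iio ν.card := by
      rw [hvalx x.1 x.2 rfl]; simp
    have hres := hbase.insert hnot
    rw [hvalx x.1 x.2 rfl] at hres
    have hs : (↑μ.cells : Set (ℕ × ℕ)) = insert x ↑ν.cells := by
      rw [hcells]; simp
    rw [hs, hcard, Iio_succ_nat]
    exact hres
  · intro i j hmem
    have h0 : (i, j) ≠ x := fun hc => hmem ((hmemμ _).2 (Or.inl hc))
    have h0ν : (i, j) ∉ ν := fun hc => hmem ((hmemμ _).2 (Or.inr hc))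
    rw [hval i j h0]
    exact hT.2.2.2 i j h0ν


lemma exists_peel {μ : YoungDiagram} {T : ℕ → ℕ → ℕ} (hT : IsSYT μ T) (hpos : 0 < μ.card) :
    ∃ (ν : YoungDiagram) (hcov : ν ⋖ μ) (T' : ℕ → ℕ → ℕ), IsSYT ν T' ∧ insT hcov T' = T := by
  obtain ⟨x, hxμ, hxval⟩ := syt_surj hT (show μ.card - 1 < μ.card by omega)
  have hmax : ∀ c : ℕ × ℕ, c ∈ μ → c ≠ x → T c.1 c.2 < μ.card - 1 := by
    intro c hc hne
    have h1 := syt_maps hT hc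
    have h2 : T c.1 c.2 ≠ μ.card - 1 := fun he => hne (syt_inj hT hc hxμ (by rw [he, hxval]))
    omega
  have hlow : IsLowerSet (↑(μ.cells.erase x) : Set (ℕ × ℕ)) := by
    intro a b hba ha
    simp only [Finset.coe_erase, Set.mem_diff, Finset.mem_coe, YoungDiagram.mem_cells,
      Set.mem_singleton_iff] at ha ⊢
    obtain ⟨haμ, hane⟩ := ha
    refine ⟨μ.isLowerSet hba haμ, ?_⟩
    rintro rfl
    have := syt_lt hT haμ hba (fun hc => hane hc.symm)
    rw [hxval] at this
    have := syt_maps hT haμ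
    omega
  set ν : YoungDiagram := ⟨μ.cells.erase x, hlow⟩ with hνdef
  have hνcells : ν.cells = μ.cells.erase x := rfl
  have hmemν : ∀ c : ℕ × ℕ, c ∈ ν ↔ c ∈ μ ∧ c ≠ x := by
    intro c
    rw [← YoungDiagram.mem_cells, hνcells, Finset.mem_erase, YoungDiagram.mem_cells]
    tauto
  have hcards : ν.card = μ.card - 1 := by
    show (μ.cells.erase x).card = μ.cells.card - 1
    exact Finset.card_erase_of_mem ((YoungDiagram.mem_cells x).2 hxμ)
  have hcov : ν ⋖ μ := by
    rw [covby_iff]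
    constructor
    · rw [← YoungDiagram.cells_subset_iff, hνcells]
      exact Finset.erase_subset _ _
    · omega
  obtain ⟨hnx, hncells⟩ := newCell_spec hcov
  have hx' : newCell hcov = x := by
    have hmem : newCell hcov ∈ μ.cells := hncells ▸ Finset.mem_insert_self _ _
    by_contra hne
    exact hnx ((hmemν _).2 ⟨(YoungDiagram.mem_cells _).1 hmem, hne⟩)
  refine ⟨ν, hcov, fun a b => if (a, b) = x then 0 else T a b, ⟨?_, ?_, ?_, ?_⟩, ?_⟩
  · intro i j hmem
    obtain ⟨h1μ, h1x⟩ := (hmemν _).1 hmem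
    have h0μ : (i, j) ∈ μ := μ.up_left_mem le_rfl (by omega) h1μ
    have h0x : (i, j) ≠ x := by
      intro he
      have hlt := syt_lt hT (x := (i, j)) h1μ ⟨le_rfl, by omega⟩ (by simp)
      rw [he, hxval] at hlt
      have := syt_maps hT h1μ
      omega
    simp only [if_neg h0x, if_neg h1x]
    exact hT.1 i j h1μ
  · intro i j hmem
    obtain ⟨h1μ, h1x⟩ := (hmemν _).1 hmem
    have h0μ : (i, j) ∈ μ := μ.up_left_mem (by omega) le_rfl h1μ
    have h0x : (i, j) ≠ x := by
      intro he
      have hlt := syt_lt hT (x := (i, j)) h1μ ⟨by omega, le_rfl⟩ (by simp)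
      rw [he, hxval] at hlt
      have := syt_maps hT h1μ
      omega
    simp only [if_neg h0x, if_neg h1x]
    exact hT.2.1 i j h1μ
  · have hbij : Set.BijOn (fun c : ℕ × ℕ => T c.1 c.2) (↑ν.cells) (Set.Iio ν.card) := by
      refine ⟨?_, ?_, ?_⟩
      · intro c hc
        obtain ⟨hcμ, hcx⟩ := (hmemν c).1 ((YoungDiagram.mem_cells c).1 hc)
        simp only [Set.mem_Iio]
        rw [hcards]
        exact hmax c hcμ hcx
      · refine Set.InjOn.mono ?_ hT.2.2.1.2.1
        intro c hc
        exact (YoungDiagram.mem_cells c).2 ((hmemν c).1 ((YoungDiagram.mem_cells c).1 hc)).1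
      · intro v hv
        simp only [Set.mem_Iio] at hv
        rw [hcards] at hv
        obtain ⟨c, hcμ, hcv⟩ := syt_surj hT (by omega : v < μ.card)
        have hcx : c ≠ x := by
          rintro rfl
          rw [hxval] at hcv
          omega
        exact ⟨c, (YoungDiagram.mem_cells c).2 ((hmemν c).2 ⟨hcμ, hcx⟩), hcv⟩
    refine hbij.congr ?_
    intro c hc
    have hcx : c ≠ x := ((hmemν c).1 ((YoungDiagram.mem_cells c).1 hc)).2
    show T c.1 c.2 = if (c.1, c.2) = x then 0 else T c.1 c.2
    rw [if_neg (by intro he; exact hcx he)]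
  · intro i j hmem
    by_cases h0 : (i, j) = x
    · simp only [if_pos h0]
    · simp only [if_neg h0]
      refine hT.2.2.2 i j (fun hc => hmem ((hmemν _).2 ⟨hc, h0⟩))
  · funext a b
    show (if (a, b) = newCell hcov then ν.card else if (a, b) = x then 0 else T a b) = T a b
    rw [hx']
    by_cases h0 : (a, b) = x
    · rw [if_pos h0]
      have hTab : T a b = μ.card - 1 := by
        have h1 : a = x.1 := by rw [← h0]
        have h2 : b = x.2 := by rw [← h0]
        rw [h1, h2]; exact hxval
      omega
    · rw [if_neg h0, if_neg h0]

lemma nat_card_sigma {ι : Type*} [Fintype ι] (β : ι → Type*) [∀ i, Finite (β i)] :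
    Nat.card (Σ i, β i) = ∑ i, Nat.card (β i) := by
  haveI := fun i => Fintype.ofFinite (β i)
  simp only [Nat.card_eq_fintype_card]
  exact Fintype.card_sigma

lemma branching (μ : YoungDiagram) (hpos : 0 < μ.card) :
    Nat.card {T : ℕ → ℕ → ℕ // IsSYT μ T} =
      ∑ ν ∈ dcov μ, Nat.card {T : ℕ → ℕ → ℕ // IsSYT ν T} := by
  have hbij : Function.Bijective
      (fun p : Σ ν : ↥(dcov μ), {T : ℕ → ℕ → ℕ // IsSYT ν.1 T} =>
        (⟨insT (mem_dcov.1 p.1.2) p.2.1, insT_isSYT _ p.2.2⟩ :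
          {T : ℕ → ℕ → ℕ // IsSYT μ T})) := by
    constructor
    · rintro ⟨⟨ν₁, hν₁⟩, ⟨T₁, hT₁⟩⟩ ⟨⟨ν₂, hν₂⟩, ⟨T₂, hT₂⟩⟩ hpq
      simp only [Subtype.mk.injEq] at hpq
      have h₁ := mem_dcov.1 hν₁
      have h₂ := mem_dcov.1 hν₂
      obtain ⟨hx₁, hc₁⟩ := newCell_spec h₁
      obtain ⟨hx₂, hc₂⟩ := newCell_spec h₂
      set x₁ := newCell h₁
      set x₂ := newCell h₂
      have hcard₁ : μ.card = ν₁.card + 1 := (covby_iff.1 h₁).2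
      have hcard₂ : μ.card = ν₂.card + 1 := (covby_iff.1 h₂).2
      have hval₁ : insT h₁ T₁ x₁.1 x₁.2 = ν₁.card := by
        show (if (x₁.1, x₁.2) = newCell h₁ then _ else _) = _
        rw [if_pos rfl]
      have hval₂ : insT h₂ T₂ x₂.1 x₂.2 = ν₂.card := by
        show (if (x₂.1, x₂.2) = newCell h₂ then _ else _) = _
        rw [if_pos rfl]
      have hxx : x₁ = x₂ := by
        by_contra hne
        have hx₂ν₁ : x₂ ∈ ν₁ := by
          have hx₂μ : x₂ ∈ μ.cells := hc₂ ▸ Finset.mem_insert_self _ _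
          rw [hc₁, Finset.mem_insert] at hx₂μ
          rcases hx₂μ with h | h
          · exact absurd h.symm hne
          · exact (YoungDiagram.mem_cells _).1 h
        have hlt : insT h₁ T₁ x₂.1 x₂.2 < ν₁.card := by
          have : insT h₁ T₁ x₂.1 x₂.2 = T₁ x₂.1 x₂.2 := by
            show (if (x₂.1, x₂.2) = newCell h₁ then _ else _) = _
            rw [if_neg (by intro he; exact hne (he : x₂ = x₁).symm)]
          rw [this]
          exact syt_maps hT₁ hx₂ν₁
        rw [hpq, hval₂] at hlt
        omega
      have hνν : ν₁ = ν₂ := by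
        apply yd_ext
        have e₁ : ν₁.cells = μ.cells.erase x₁ := by
          rw [hc₁, Finset.erase_insert (fun hc => hx₁ ((YoungDiagram.mem_cells _).1 hc))]
        have e₂ : ν₂.cells = μ.cells.erase x₂ := by
          rw [hc₂, Finset.erase_insert (fun hc => hx₂ ((YoungDiagram.mem_cells _).1 hc))]
        rw [e₁, e₂, hxx]
      subst hνν
      have hTT : T₁ = T₂ := by
        funext a b
        by_cases h0 : (a, b) = x₁
        · have hz₁ : T₁ a b = 0 := hT₁.2.2.2 a b (by rw [h0]; exact hx₁)
          have hz₂ : T₂ a b = 0 := hT₂.2.2.2 a b (by rw [h0, hxx]; exact hx₂)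
          rw [hz₁, hz₂]
        · have e₁ : insT h₁ T₁ a b = T₁ a b := by
            show (if (a, b) = newCell h₁ then _ else _) = _
            rw [if_neg h0]
          have e₂ : insT h₂ T₂ a b = T₂ a b := by
            show (if (a, b) = newCell h₂ then _ else _) = _
            rw [if_neg (fun he => h0 ((he : (a, b) = x₂).trans hxx.symm))]
          rw [← e₁, ← e₂, hpq]
      subst hTT
      rfl
    · rintro ⟨T, hT⟩
      obtain ⟨ν, hcov, T', hT', heq⟩ := exists_peel hT hpos
      exact ⟨⟨⟨ν, mem_dcov.2 hcov⟩, ⟨T', hT'⟩⟩, Subtype.ext heq⟩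
  calc Nat.card {T : ℕ → ℕ → ℕ // IsSYT μ T}
      = Nat.card (Σ ν : ↥(dcov μ), {T : ℕ → ℕ → ℕ // IsSYT ν.1 T}) :=
        (Nat.card_eq_of_bijective _ hbij).symm
    _ = ∑ ν : ↥(dcov μ), Nat.card {T : ℕ → ℕ → ℕ // IsSYT ν.1 T} := nat_card_sigma _
    _ = ∑ ν ∈ dcov μ, Nat.card {T : ℕ → ℕ → ℕ // IsSYT ν T} :=
        Finset.sum_coe_sort (dcov μ) (fun ν => Nat.card {T : ℕ → ℕ → ℕ // IsSYT ν T})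

lemma eq_bot_of_card_zero {μ : YoungDiagram} (h : μ.card = 0) : μ = ⊥ := by
  apply yd_ext
  rw [YoungDiagram.cells_bot]
  exact Finset.card_eq_zero.1 h

instance unique_syt_bot : Unique {T : ℕ → ℕ → ℕ // IsSYT ⊥ T} where
  default := ⟨fun _ _ => 0, by
    refine ⟨?_, ?_, ?_, ?_⟩
    · intro i j h; exact absurd h (YoungDiagram.notMem_bot _)
    · intro i j h; exact absurd h (YoungDiagram.notMem_bot _)
    · have h1 : (⊥ : YoungDiagram).cells = ∅ := YoungDiagram.cells_bot
      have h2 : (⊥ : YoungDiagram).card = 0 := by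
        show (⊥ : YoungDiagram).cells.card = 0
        rw [h1]; rfl
      rw [h1, h2]
      refine ⟨?_, ?_, ?_⟩ <;> intro c hc <;> simp at hc
    · intro i j _; rfl⟩
  uniq := by
    rintro ⟨T, hT⟩
    apply Subtype.ext
    funext i j
    exact hT.2.2.2 i j (YoungDiagram.notMem_bot _)

lemma card_syt_bot : Nat.card {T : ℕ → ℕ → ℕ // IsSYT ⊥ T} = 1 := Nat.card_unique


/-! ### chains -/

lemma chain_le {n : ℕ} {μ : YoungDiagram} {c : Fin (n + 1) → YoungDiagram}
    (hc : IsSaturatedChain n μ c) (i : Fin (n + 1)) : c i ≤ μ := by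
  have hmono : Monotone c := by
    rcases Nat.eq_zero_or_pos n with rfl | hn
    · intro a b _
      have hab : a = b := Fin.ext (by omega)
      rw [hab]
    · exact (Fin.strictMono_iff_lt_succ.2 (fun i => (hc.2.2 i).1)).monotone
  rw [← hc.2.1]
  exact hmono (Fin.le_last i)

instance chainsFinite (n : ℕ) (μ : YoungDiagram) :
    Finite {c : Fin (n + 1) → YoungDiagram // IsSaturatedChain n μ c} := by
  haveI : Finite ↥{ρ : YoungDiagram | ρ ≤ μ} := (finite_le μ).to_subtype
  refine Finite.of_injective
    (fun c => (fun i => (⟨c.1 i, chain_le c.2 i⟩ : ↥{ρ : YoungDiagram | ρ ≤ μ}))) ?_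
  intro a b hab
  apply Subtype.ext
  funext i
  exact congrArg Subtype.val (congrFun hab i)

instance uniqueChainBot : Unique {c : Fin (0 + 1) → YoungDiagram // IsSaturatedChain 0 ⊥ c} where
  default := ⟨fun _ => ⊥, rfl, rfl, fun i => i.elim0⟩
  uniq := by
    rintro ⟨c, hc⟩
    apply Subtype.ext
    funext i
    show c i = ⊥
    have hi : i = 0 := Fin.ext (by omega)
    rw [hi]
    exact hc.1

lemma chains_eq_F : ∀ (n : ℕ) (μ : YoungDiagram), μ.card = n →
    Nat.card {c : Fin (n + 1) → YoungDiagram // IsSaturatedChain n μ c} =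
      Nat.card {T : ℕ → ℕ → ℕ // IsSYT μ T} := by
  intro n
  induction n with
  | zero =>
    intro μ hμ
    have h := eq_bot_of_card_zero hμ
    subst h
    rw [Nat.card_unique, card_syt_bot]
  | succ n ih =>
    intro μ hμ
    have hbij : Function.Bijective
        (fun p : Σ ν : ↥(dcov μ), {c : Fin (n + 1) → YoungDiagram // IsSaturatedChain n ν.1 c} =>
          (⟨Fin.snoc p.2.1 μ, ?_, ?_, ?_⟩ :
            {c : Fin (n + 2) → YoungDiagram // IsSaturatedChain (n + 1) μ c})) := ?_
    rotate_left
    · -- c 0 = ⊥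
      rw [show (0 : Fin (n + 2)) = Fin.castSucc 0 by simp, Fin.snoc_castSucc]
      exact p.2.2.1
    · exact Fin.snoc_last _ _
    · intro i
      refine Fin.lastCases ?_ ?_ i
      · rw [show Fin.castSucc (Fin.last n) = Fin.castSucc (Fin.last n) from rfl,
          Fin.snoc_castSucc, show (Fin.last n).succ = Fin.last (n + 1) from Fin.succ_last n,
          Fin.snoc_last]
        rw [p.2.2.2.1]
        exact mem_dcov.1 p.1.2
      · intro j
        rw [Fin.succ_castSucc, Fin.snoc_castSucc, Fin.snoc_castSucc]
        exact p.2.2.2.2 j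
    · constructor
      · rintro ⟨⟨ν₁, hν₁⟩, ⟨c₁, hc₁⟩⟩ ⟨⟨ν₂, hν₂⟩, ⟨c₂, hc₂⟩⟩ hpq
        simp only [Subtype.mk.injEq] at hpq
        have hcc : c₁ = c₂ := by
          funext i
          have := congrFun (congrArg Subtype.val hpq) (Fin.castSucc i)
          dsimp only at this
          rwa [Fin.snoc_castSucc, Fin.snoc_castSucc] at this
        subst hcc
        have e₁ : c₁ (Fin.last n) = ν₁ := hc₁.2.1
        have e₂ : c₁ (Fin.last n) = ν₂ := hc₂.2.1
        have hνν : ν₁ = ν₂ := e₁.symm.trans e₂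
        subst hνν
        rfl
      · rintro ⟨c, hc⟩
        have hcov : c (Fin.castSucc (Fin.last n)) ⋖ μ := by
          have := hc.2.2 (Fin.last n)
          rwa [show (Fin.last n).succ = Fin.last (n + 1) from Fin.succ_last n, hc.2.1] at this
        refine ⟨⟨⟨c (Fin.castSucc (Fin.last n)), mem_dcov.2 hcov⟩,
          ⟨fun i => c (Fin.castSucc i), ?_, rfl, ?_⟩⟩, ?_⟩
        · show c (Fin.castSucc 0) = ⊥
          rw [Fin.castSucc_zero]
          exact hc.1
        · intro j
          show c (Fin.castSucc (Fin.castSucc j)) ⋖ c (Fin.castSucc j.succ)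
          have := hc.2.2 (Fin.castSucc j)
          rwa [Fin.succ_castSucc] at this
        · have hsnoc : Fin.snoc (fun i : Fin (n + 1) => c (Fin.castSucc i)) μ = c := by
            funext i
            refine Fin.lastCases ?_ ?_ i
            · rw [Fin.snoc_last, hc.2.1]
            · intro j
              rw [Fin.snoc_castSucc]
          exact Subtype.ext hsnoc
    have hstep : Nat.card {c : Fin (n + 2) → YoungDiagram // IsSaturatedChain (n + 1) μ c} =
        ∑ ν : ↥(dcov μ),
          Nat.card {c : Fin (n + 1) → YoungDiagram // IsSaturatedChain n ν.1 c} := by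
      rw [← Nat.card_eq_of_bijective _ hbij]
      exact nat_card_sigma _
    rw [hstep, branching μ (by omega)]
    rw [← Finset.sum_coe_sort (dcov μ) (fun ν => Nat.card {T : ℕ → ℕ → ℕ // IsSYT ν T})]
    apply Finset.sum_congr rfl
    intro ν _
    exact ih ν.1 (by
      have := (covby_iff.1 (mem_dcov.1 ν.2)).2
      omega)


noncomputable def F (μ : YoungDiagram) : ℕ := Nat.card {T : ℕ → ℕ → ℕ // IsSYT μ T}

lemma F_branch {μ : YoungDiagram} (hpos : 0 < μ.card) : F μ = ∑ ν ∈ dcov μ, F ν :=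
  branching μ hpos

lemma F_bot : F ⊥ = 1 := card_syt_bot

lemma card_bot : (⊥ : YoungDiagram).card = 0 := by
  show (⊥ : YoungDiagram).cells.card = 0
  rw [YoungDiagram.cells_bot]; rfl

lemma dcov_level {μ : YoungDiagram} {n : ℕ} (hμ : μ.card = n + 1) :
    dcov μ = (level n).filter (· ⋖ μ) := by
  ext κ
  simp only [mem_dcov, Finset.mem_filter, mem_level]
  constructor
  · intro h
    have := (covby_iff.1 h).2
    exact ⟨by omega, h⟩
  · exact fun h => h.2

lemma ucov_level {ρ : YoungDiagram} {n : ℕ} (hρ : ρ.card + 1 = n) :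
    ucov ρ = (level n).filter (ρ ⋖ ·) := by
  ext κ
  simp only [mem_ucov, Finset.mem_filter, mem_level]
  constructor
  · intro h
    have := (covby_iff.1 h).2
    exact ⟨by omega, h⟩
  · exact fun h => h.2

/-- The key "differential poset" identity. -/
lemma sum_ucov : ∀ (n : ℕ) (ν : YoungDiagram), ν.card = n →
    ∑ l ∈ ucov ν, F l = (n + 1) * F ν := by
  intro n
  induction n using Nat.strong_induction_on with
  | _ n ih =>
    intro ν hν
    have step1 : ∑ l ∈ ucov ν, F l = ∑ l ∈ ucov ν, ∑ κ ∈ dcov l, F κ := by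
      refine Finset.sum_congr rfl (fun l hl => ?_)
      exact F_branch (by
        have := (covby_iff.1 (mem_ucov.1 hl)).2
        omega)
    have step2 : ∑ l ∈ ucov ν, ∑ κ ∈ dcov l, F κ =
        ∑ κ ∈ level n, (ucov ν ∩ ucov κ).card * F κ := by
      have e1 : ∀ l ∈ ucov ν, ∑ κ ∈ dcov l, F κ =
          ∑ κ ∈ level n, if κ ⋖ l then F κ else 0 := by
        intro l hl
        rw [dcov_level (show l.card = n + 1 from by
          have := (covby_iff.1 (mem_ucov.1 hl)).2
          omega), Finset.sum_filter]
      rw [Finset.sum_congr rfl e1, Finset.sum_comm]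
      refine Finset.sum_congr rfl (fun κ _ => ?_)
      have e2 : (ucov ν).filter (fun l => κ ⋖ l) =
          ucov ν ∩ ucov κ := by
        ext l
        simp only [Finset.mem_filter, Finset.mem_inter, mem_ucov]
      calc ∑ l ∈ ucov ν, (if κ ⋖ l then F κ else 0)
          = ∑ l ∈ (ucov ν).filter (fun l => κ ⋖ l), F κ := by
            rw [Finset.sum_filter]
        _ = (ucov ν ∩ ucov κ).card * F κ := by rw [e2, Finset.sum_const, smul_eq_mul]
    have hsplit : ∀ κ ∈ level n,
        (ucov ν ∩ ucov κ).card = (dcov ν ∩ dcov κ).card + (if κ = ν then 1 else 0) := by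
      intro κ hκ
      by_cases h : κ = ν
      · subst h
        rw [if_pos rfl, Finset.inter_self, Finset.inter_self]
        exact corner_count κ
      · rw [if_neg h]
        have := common_cov_card (Ne.symm h) (by rw [hν, (mem_level.1 hκ)])
        omega
    have step3 : ∑ κ ∈ level n, (ucov ν ∩ ucov κ).card * F κ =
        (∑ κ ∈ level n, (dcov ν ∩ dcov κ).card * F κ) + F ν := by
      have : ∀ κ ∈ level n, (ucov ν ∩ ucov κ).card * F κ =
          (dcov ν ∩ dcov κ).card * F κ + (if κ = ν then F κ else 0) := by
        intro κ hκ
        rw [hsplit κ hκ, add_mul]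
        congr 1
        by_cases h : κ = ν <;> simp [h]
      rw [Finset.sum_congr rfl this, Finset.sum_add_distrib]
      congr 1
      rw [Finset.sum_ite_eq' (level n) ν F]
      rw [if_pos (mem_level.2 hν)]
    have step4 : ∑ κ ∈ level n, (dcov ν ∩ dcov κ).card * F κ =
        ∑ ρ ∈ dcov ν, ∑ κ ∈ ucov ρ, F κ := by
      have e1 : ∀ κ, (dcov ν ∩ dcov κ).card * F κ =
          ∑ ρ ∈ dcov ν, if ρ ⋖ κ then F κ else 0 := by
        intro κ
        have e2 : dcov ν ∩ dcov κ =
            (dcov ν).filter (fun ρ => ρ ⋖ κ) := by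
          ext ρ
          simp only [Finset.mem_filter, Finset.mem_inter, mem_dcov]
        rw [e2, ← Finset.sum_filter, Finset.sum_const, smul_eq_mul]
      simp only [e1]
      rw [Finset.sum_comm]
      refine Finset.sum_congr rfl (fun ρ hρ => ?_)
      rw [← Finset.sum_filter]
      congr 1
      rw [ucov_level (show ρ.card + 1 = n from by
        have := (covby_iff.1 (mem_dcov.1 hρ)).2
        omega)]
    have step5 : ∑ ρ ∈ dcov ν, ∑ κ ∈ ucov ρ, F κ = n * ∑ ρ ∈ dcov ν, F ρ := by
      rw [Finset.mul_sum]
      refine Finset.sum_congr rfl (fun ρ hρ => ?_)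
      have hρc : ρ.card = n - 1 := by
        have := (covby_iff.1 (mem_dcov.1 hρ)).2
        omega
      have hn1 : 1 ≤ n := by
        have := (covby_iff.1 (mem_dcov.1 hρ)).2
        omega
      rw [ih (n - 1) (by omega) ρ hρc]
      congr 1
      omega
    rw [step1, step2, step3, step4, step5]
    rcases Nat.eq_zero_or_pos n with rfl | hn
    · simp
    · rw [← F_branch (by omega)]
      ring

lemma level_zero : level 0 = {⊥} := by
  ext μ
  simp only [mem_level, Finset.mem_singleton]
  constructor
  · exact eq_bot_of_card_zero
  · rintro rfl; exact card_bot

lemma sum_sq : ∀ n : ℕ, ∑ μ ∈ level n, F μ * F μ = n.factorial := by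
  intro n
  induction n with
  | zero =>
    rw [level_zero, Finset.sum_singleton, F_bot]
    rfl
  | succ n ih =>
    have step1 : ∑ μ ∈ level (n + 1), F μ * F μ =
        ∑ μ ∈ level (n + 1), ∑ ν ∈ level n, if ν ⋖ μ then F ν * F μ else 0 := by
      refine Finset.sum_congr rfl (fun μ hμ => ?_)
      rw [F_branch (μ := μ) (by rw [mem_level.1 hμ]; omega)]
      nth_rewrite 1 [dcov_level (mem_level.1 hμ)]
      rw [Finset.sum_filter, Finset.sum_mul]
      refine Finset.sum_congr rfl (fun ν _ => ?_)
      by_cases h : ν ⋖ μ <;> simp [h]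
    have step2 : ∑ μ ∈ level (n + 1), ∑ ν ∈ level n, (if ν ⋖ μ then F ν * F μ else 0) =
        ∑ ν ∈ level n, F ν * ∑ μ ∈ ucov ν, F μ := by
      rw [Finset.sum_comm]
      refine Finset.sum_congr rfl (fun ν hν => ?_)
      rw [Finset.mul_sum, ucov_level (show ν.card + 1 = n + 1 from by
        rw [mem_level.1 hν]), Finset.sum_filter]
    rw [step1, step2]
    have step3 : ∀ ν ∈ level n, F ν * ∑ μ ∈ ucov ν, F μ = (n + 1) * (F ν * F ν) := by
      intro ν hν
      rw [sum_ucov n ν (mem_level.1 hν)]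
      ring
    rw [Finset.sum_congr rfl step3, ← Finset.mul_sum, ih]
    rfl


end SYTProof

/-- In Young's lattice, the number of saturated chains from `∅` to a diagram `μ`
of size `n` equals `f^μ`, the number of standard Young tableaux of shape `μ`;
moreover `Σ_{λ ⊢ n} (f^λ)² = n!`. -/
theorem saturated_chains_eq_syt_and_sum_of_squares (n : ℕ) :
    (∀ μ : YoungDiagram, μ.card = n →
      Nat.card {c : Fin (n + 1) → YoungDiagram // IsSaturatedChain n μ c} =
        Nat.card {T : ℕ → ℕ → ℕ // IsSYT μ T}) ∧
    Nat.card (Σ μ : {μ : YoungDiagram // μ.card = n},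
        {T : ℕ → ℕ → ℕ // IsSYT μ.1 T} × {T : ℕ → ℕ → ℕ // IsSYT μ.1 T}) =
      Nat.factorial n := by
  constructor
  · intro μ hμ
    exact SYTProof.chains_eq_F n μ hμ
  · haveI : Fintype {μ : YoungDiagram // μ.card = n} := (SYTProof.finite_card_eq n).fintype
    rw [SYTProof.nat_card_sigma]
    have h1 : ∀ μ : {μ : YoungDiagram // μ.card = n},
        Nat.card ({T : ℕ → ℕ → ℕ // IsSYT μ.1 T} × {T : ℕ → ℕ → ℕ // IsSYT μ.1 T}) =
          SYTProof.F μ.1 * SYTProof.F μ.1 := fun μ => Nat.card_prod _ _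
    rw [Finset.sum_congr rfl (fun μ _ => h1 μ)]
    rw [← Finset.sum_subtype (SYTProof.level n) (fun μ => SYTProof.mem_level)
      (fun μ => SYTProof.F μ * SYTProof.F μ)]
    exact SYTProof.sum_sq n
end
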